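/- arXiv:1606.01414 — 4 statements merged into one kernel-verified Lean document; each statement's English description precedes it below -/
import Mathlib

section
/- For even n, the group Quad(ℤ/nℤ, ℝ/ℤ) of quadratic forms from ℤ/nℤ to ℝ/ℤ is cyclic of order 2n, generated by the form q(m) = m²/(2n) mod ℤ. -/
variable {A B : Type*} [AddCommGroup A] [AddCommGroup B]

/-- The polarization of a map between abelian groups. -/
def polz (γ : A → B) (x y : A) : B := γ (x + y) - γ x - γ y

/-- A quadratic form between abelian groups: even, with bilinear polarization. -/
def IsQuadratic (γ : A → B) : Prop :=
  (∀ a, γ a = γ (-a)) ∧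
  (∀ x x' y, polz γ (x + x') y = polz γ x y + polz γ x' y) ∧
  (∀ x y y', polz γ x (y + y') = polz γ x y + polz γ x y')

/-- The quadratic form `m ↦ m²/(2n)` on `ℤ/nℤ` with values in `ℝ/ℤ`. -/
noncomputable def qGenEven (n : ℕ) : ZMod n → AddCircle (1 : ℝ) :=
  fun m => (((m.val : ℝ) ^ 2 / (2 * n) : ℝ) : AddCircle (1 : ℝ))

/-- If `M ∣ a - b` then `a/M = b/M` in `ℝ/ℤ`. -/
lemma coe_div_congr {M : ℕ} (hM : 0 < M) {a b : ℤ} (h : (M : ℤ) ∣ a - b) :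
    (((a : ℝ) / M : ℝ) : AddCircle (1 : ℝ)) = (((b : ℝ) / M : ℝ) : AddCircle (1 : ℝ)) := by
  obtain ⟨c, hc⟩ := h
  rw [← sub_eq_zero, ← AddCircle.coe_sub, AddCircle.coe_eq_zero_iff]
  refine ⟨c, ?_⟩
  have hM' : (M : ℝ) ≠ 0 := by positivity
  have : (a : ℝ) = b + M * c := by
    have : (a : ℝ) - b = M * c := by exact_mod_cast congrArg (Int.cast : ℤ → ℝ) hc
    linarith
  rw [zsmul_eq_mul, mul_one, this]
  field_simp
  ring

/-- `a ≡ b mod n` with `n` even implies `a² ≡ b² mod 2n`. -/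
lemma sq_cong {n : ℕ} (hn : Even n) {a b : ℤ} (h : (n : ℤ) ∣ a - b) :
    ((2 * n : ℕ) : ℤ) ∣ a ^ 2 - b ^ 2 := by
  obtain ⟨m, hm⟩ := hn
  obtain ⟨c, hc⟩ := h
  have ha : a = b + c * n := by linarith
  refine ⟨b * c + c ^ 2 * m, ?_⟩
  subst ha
  have : (n : ℤ) = m + m := by exact_mod_cast hm
  push_cast
  rw [this]; ring

/-- Value of `qGenEven` at any integer representative. -/
lemma qGenEven_int (n : ℕ) (hn : Even n) (hpos : 0 < n) (a : ℤ) :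
    qGenEven n ((a : ZMod n)) = ((((a : ℝ) ^ 2) / (2 * n) : ℝ) : AddCircle (1 : ℝ)) := by
  unfold qGenEven
  set x : ZMod n := (a : ZMod n)
  have hdvd : (n : ℤ) ∣ (x.val : ℤ) - a := by
    haveI : NeZero n := ⟨hpos.ne'⟩
    have hc : ((a : ℤ) : ZMod n) = ((x.val : ℤ) : ZMod n) := by
      push_cast
      rw [ZMod.natCast_val, ZMod.cast_id]
    exact Int.ModEq.dvd ((ZMod.intCast_eq_intCast_iff _ _ _).mp hc)
  have h2 := sq_cong hn hdvd
  have := coe_div_congr (M := 2 * n) (by omega) (a := (x.val : ℤ) ^ 2) (b := a ^ 2) h2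
  have e1 : (((x.val : ℤ) ^ 2 : ℤ) : ℝ) = (x.val : ℝ) ^ 2 := by push_cast; ring
  have e2 : ((a ^ 2 : ℤ) : ℝ) = (a : ℝ) ^ 2 := by push_cast; ring
  have e3 : ((2 * n : ℕ) : ℝ) = 2 * n := by push_cast; ring
  rw [e1, e2, e3] at this
  exact this

/-- Polarization formula for `qGenEven` on integer representatives. -/
lemma polz_qGenEven (n : ℕ) (hn : Even n) (hpos : 0 < n) (a b : ℤ) :
    polz (qGenEven n) (a : ZMod n) (b : ZMod n)
      = ((((a : ℝ) * b) / n : ℝ) : AddCircle (1 : ℝ)) := by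
  have hsum : ((a : ZMod n) + (b : ZMod n)) = ((a + b : ℤ) : ZMod n) := by push_cast; ring
  rw [polz, hsum, qGenEven_int n hn hpos (a + b), qGenEven_int n hn hpos a,
    qGenEven_int n hn hpos b, ← AddCircle.coe_sub, ← AddCircle.coe_sub]
  congr 1
  have h1 : (n : ℝ) ≠ 0 := by positivity
  field_simp
  push_cast
  ring

/-- For even `n`, the group of quadratic forms `ℤ/nℤ → ℝ/ℤ` is cyclic of order `2n`,
generated by `m ↦ m²/(2n)`. -/
theorem quadGroup_zmod_even_cyclic (n : ℕ) (hn : Even n) (hpos : 0 < n) :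
    IsQuadratic (qGenEven n) ∧
    (2 * n) • qGenEven n = 0 ∧
    (∀ m : ℕ, 0 < m → m < 2 * n → m • qGenEven n ≠ 0) ∧
    (∀ γ : ZMod n → AddCircle (1 : ℝ), IsQuadratic γ → ∃ k : ℕ, γ = k • qGenEven n) := by
  haveI : NeZero n := ⟨hpos.ne'⟩
  have hn2 : 2 ≤ n := by
    rcases hn with ⟨m, hm⟩; omega
  have hsurj : ∀ x : ZMod n, ∃ a : ℤ, (a : ZMod n) = x := fun x =>
    ⟨(x.val : ℤ), by push_cast; rw [ZMod.natCast_val, ZMod.cast_id]⟩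
  refine ⟨⟨?_, ?_, ?_⟩, ?_, ?_, ?_⟩
  · -- evenness
    intro x
    obtain ⟨a, rfl⟩ := hsurj x
    have : (-(a : ZMod n)) = ((-a : ℤ) : ZMod n) := by push_cast; ring
    rw [this, qGenEven_int n hn hpos a, qGenEven_int n hn hpos (-a)]
    congr 2
    push_cast; ring
  · -- additivity in first slot
    intro x x' y
    obtain ⟨a, rfl⟩ := hsurj x
    obtain ⟨a', rfl⟩ := hsurj x'
    obtain ⟨b, rfl⟩ := hsurj y
    have hs : ((a : ZMod n) + (a' : ZMod n)) = ((a + a' : ℤ) : ZMod n) := by push_cast; ring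
    rw [hs, polz_qGenEven n hn hpos (a + a') b, polz_qGenEven n hn hpos a b,
      polz_qGenEven n hn hpos a' b, ← AddCircle.coe_add]
    congr 1
    have h1 : (n : ℝ) ≠ 0 := by positivity
    field_simp
    push_cast
    ring
  · -- additivity in second slot
    intro x y y'
    obtain ⟨a, rfl⟩ := hsurj x
    obtain ⟨b, rfl⟩ := hsurj y
    obtain ⟨b', rfl⟩ := hsurj y'
    have hs : ((b : ZMod n) + (b' : ZMod n)) = ((b + b' : ℤ) : ZMod n) := by push_cast; ring
    rw [hs, polz_qGenEven n hn hpos a (b + b'), polz_qGenEven n hn hpos a b,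
      polz_qGenEven n hn hpos a b', ← AddCircle.coe_add]
    congr 1
    have h1 : (n : ℝ) ≠ 0 := by positivity
    field_simp
    push_cast
    ring
  · -- order divides 2n
    funext x
    simp only [Pi.smul_apply, Pi.zero_apply]
    unfold qGenEven
    rw [← AddCircle.coe_nsmul, AddCircle.coe_eq_zero_iff]
    refine ⟨(x.val : ℤ) ^ 2, ?_⟩
    have h1 : (2 * (n : ℝ)) ≠ 0 := by positivity
    rw [zsmul_eq_mul, mul_one, nsmul_eq_mul]
    push_cast
    field_simp
  · -- no smaller multiple vanishes
    intro m hm hm2n h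
    have h1 := congrFun h (1 : ZMod n)
    haveI : Fact (1 < n) := ⟨hn2⟩
    have hv : (1 : ZMod n).val = 1 := ZMod.val_one n
    simp only [Pi.smul_apply, Pi.zero_apply] at h1
    unfold qGenEven at h1
    rw [hv, ← AddCircle.coe_nsmul, AddCircle.coe_eq_zero_iff] at h1
    obtain ⟨j, hj⟩ := h1
    rw [zsmul_eq_mul, mul_one, nsmul_eq_mul] at hj
    have h2 : (2 * (n : ℝ)) ≠ 0 := by positivity
    have hj' : (j : ℝ) * (2 * n) = m := by
      field_simp at hj
      push_cast at hj ⊢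
      linarith
    have hjz : j * (2 * (n : ℤ)) = m := by exact_mod_cast hj'
    have : 0 < j := by nlinarith [hjz]
    nlinarith [hjz]
  · -- every quadratic form is a multiple of the generator
    intro γ hγ
    obtain ⟨heven, haddl, haddr⟩ := hγ
    have hpolz0 : ∀ y, polz γ 0 y = 0 := by
      intro y
      have h := haddl 0 0 y
      rw [add_zero] at h
      exact (left_eq_add.mp h)
    have hγ0 : γ 0 = 0 := by
      have h := hpolz0 0
      simp only [polz, add_zero] at h
      have : -γ 0 = 0 := by rw [← h]; abel
      simpa using this
    have hb11 : polz γ 1 1 = γ 1 + γ 1 := by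
      have h := haddr 1 1 (-1)
      rw [add_neg_cancel] at h
      have h10 : polz γ 1 (0 : ZMod n) = 0 := by simp [polz, hγ0]
      have h1m1 : polz γ 1 (-1) = -(γ 1 + γ 1) := by
        have he : γ (-1 : ZMod n) = γ 1 := (heven 1).symm
        simp only [polz, add_neg_cancel, hγ0, he]
        abel
      rw [h10, h1m1] at h
      exact (add_neg_eq_zero.mp h.symm)
    have hpolzn : ∀ (m : ℕ) (y : ZMod n), polz γ (m • (1 : ZMod n)) y = m • polz γ 1 y := by
      intro m y
      induction m with
      | zero => simpa using hpolz0 y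
      | succ m ih => rw [succ_nsmul, haddl, ih, succ_nsmul]
    have hγm : ∀ m : ℕ, γ (m • (1 : ZMod n)) = (m ^ 2) • γ 1 := by
      intro m
      induction m with
      | zero => simpa using hγ0
      | succ m ih =>
        have hd : γ (m • (1 : ZMod n) + 1) = polz γ (m • (1 : ZMod n)) 1
            + γ (m • (1 : ZMod n)) + γ 1 := by
          simp only [polz]; abel
        rw [succ_nsmul, hd, hpolzn, hb11, ih,
          show (m + 1) ^ 2 = m ^ 2 + (m + m) + 1 by ring,
          add_nsmul, add_nsmul, add_nsmul, one_nsmul, smul_add]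
        abel
    have hns : (n • (1 : ZMod n)) = 0 := by
      rw [nsmul_eq_mul, mul_one, ZMod.natCast_self]
    have hns1 : ((n + 1) • (1 : ZMod n)) = 1 := by
      rw [nsmul_eq_mul, mul_one]
      push_cast [ZMod.natCast_self]
      ring
    have hA : (n ^ 2) • γ 1 = 0 := by rw [← hγm n, hns, hγ0]
    have hB : ((n + 1) ^ 2) • γ 1 = γ 1 := by rw [← hγm (n + 1), hns1]
    have hC : (2 * n) • γ 1 = 0 := by
      rw [show (n + 1) ^ 2 = n ^ 2 + 2 * n + 1 by ring, add_nsmul, add_nsmul, hA, one_nsmul,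
        zero_add, add_eq_right] at hB
      exact hB
    obtain ⟨r, hr⟩ := QuotientAddGroup.mk_surjective (γ 1)
    have hr' : ((r : ℝ) : AddCircle (1 : ℝ)) = γ 1 := hr
    have h0 : (((2 * n) • r : ℝ) : AddCircle (1 : ℝ)) = 0 := by
      rw [AddCircle.coe_nsmul, hr', hC]
    rw [AddCircle.coe_eq_zero_iff] at h0
    obtain ⟨j, hj⟩ := h0
    have h2 : (2 * (n : ℝ)) ≠ 0 := by positivity
    have hrval : r = (j : ℝ) / (2 * n) := by
      rw [zsmul_eq_mul, mul_one, nsmul_eq_mul] at hj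
      push_cast at hj
      field_simp
      linarith
    set k : ℕ := (j % (2 * n)).toNat with hk
    have hkz : (k : ℤ) = j % (2 * (n : ℤ)) := by
      rw [hk]
      exact Int.toNat_of_nonneg (Int.emod_nonneg j (by positivity))
    have hdvdjk : (2 * (n : ℤ)) ∣ j - (k : ℤ) := by
      rw [hkz]
      exact Int.dvd_self_sub_of_emod_eq rfl
    refine ⟨k, ?_⟩
    funext x
    set v : ℕ := x.val with hv
    have hx : x = v • (1 : ZMod n) := by
      rw [nsmul_eq_mul, mul_one, hv, ZMod.natCast_val, ZMod.cast_id]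
    have hγx : γ x = ((((v : ℝ) ^ 2 * j) / (2 * n) : ℝ) : AddCircle (1 : ℝ)) := by
      rw [hx, hγm v, ← hr', hrval, ← AddCircle.coe_nsmul]
      congr 1
      rw [nsmul_eq_mul]
      push_cast
      ring
    have hqx : (k • qGenEven n) x = ((((k : ℝ) * (v : ℝ) ^ 2) / (2 * n) : ℝ)
        : AddCircle (1 : ℝ)) := by
      simp only [Pi.smul_apply]
      unfold qGenEven
      rw [← AddCircle.coe_nsmul]
      congr 1
      rw [nsmul_eq_mul]
      push_cast
      ring
    rw [hγx, hqx]
    have hd : ((2 * n : ℕ) : ℤ) ∣ ((v : ℤ) ^ 2 * j) - ((k : ℤ) * (v : ℤ) ^ 2) := by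
      push_cast
      have : (v : ℤ) ^ 2 * j - (k : ℤ) * (v : ℤ) ^ 2 = (v : ℤ) ^ 2 * (j - k) := by ring
      rw [this]
      exact Dvd.dvd.mul_left hdvdjk _
    have := coe_div_congr (M := 2 * n) (by omega) hd
    have e1 : (((v : ℤ) ^ 2 * j : ℤ) : ℝ) = (v : ℝ) ^ 2 * j := by push_cast; ring
    have e2 : (((k : ℤ) * (v : ℤ) ^ 2 : ℤ) : ℝ) = (k : ℝ) * (v : ℝ) ^ 2 := by push_cast; ring
    have e3 : ((2 * n : ℕ) : ℝ) = 2 * n := by push_cast; ring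
    rw [e1, e2, e3] at this
    exact this
end

section
/- Let A and B be abelian groups. The map T sending a triple (f, γ_A, γ_B), where f : A ⊗ B → ℝ/ℤ is a group homomorphism and γ_A ∈ Quad(A, ℝ/ℤ), γ_B ∈ Quad(B, ℝ/ℤ), to the function (a,b) ↦ f(a ⊗ b) + γ_A(a) + γ_B(b) is a group isomorphism from Hom(A ⊗ B, ℝ/ℤ) ⊕ Quad(A, ℝ/ℤ) ⊕ Quad(B, ℝ/ℤ) onto Quad(A ⊕ B, ℝ/ℤ). -/
variable {A B : Type*} [AddCommGroup A] [AddCommGroup B]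

lemma polz_add_fun (f g : A → B) (x y : A) :
    polz (f + g) x y = polz f x y + polz g x y := by
  simp only [polz, Pi.add_apply]; abel

lemma polz_neg_fun (f : A → B) (x y : A) :
    polz (-f) x y = - polz f x y := by
  simp only [polz, Pi.neg_apply]; abel

/-- The group of `ℝ/ℤ`-valued quadratic forms on `A`. -/
noncomputable def QuadGroup (A : Type*) [AddCommGroup A] : AddSubgroup (A → AddCircle (1 : ℝ)) where
  carrier := {γ | IsQuadratic γ}
  zero_mem' := ⟨fun _ => rfl, fun _ _ _ => by simp [polz], fun _ _ _ => by simp [polz]⟩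
  add_mem' := by
    rintro f g ⟨hf1, hf2, hf3⟩ ⟨hg1, hg2, hg3⟩
    refine ⟨fun a => by simp only [Pi.add_apply, hf1 a, hg1 a], fun x x' y => ?_,
      fun x y y' => ?_⟩
    · rw [polz_add_fun, polz_add_fun, polz_add_fun, hf2, hg2]; abel
    · rw [polz_add_fun, polz_add_fun, polz_add_fun, hf3, hg3]; abel
  neg_mem' := by
    rintro f ⟨hf1, hf2, hf3⟩
    refine ⟨fun a => by simp only [Pi.neg_apply, hf1 a], fun x x' y => ?_, fun x y y' => ?_⟩
    · rw [polz_neg_fun, polz_neg_fun, polz_neg_fun, hf2]; abel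
    · rw [polz_neg_fun, polz_neg_fun, polz_neg_fun, hf3]; abel


section Aux

variable {A B C : Type*} [AddCommGroup A] [AddCommGroup B] [AddCommGroup C]

lemma IsQuadratic.zero_eq {γ : A → B} (h : IsQuadratic γ) : γ 0 = 0 := by
  have := h.2.1 0 0 0
  simp only [polz, add_zero, zero_add] at this
  -- this : γ 0 - γ 0 - γ 0 = (γ 0 - γ 0 - γ 0) + (γ 0 - γ 0 - γ 0)
  have h2 : -γ 0 = -γ 0 + -γ 0 := by
    convert this using 1 <;> abel
  have : (0 : B) = -γ 0 := by
    have := congrArg (fun x => x + γ 0) h2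
    simpa [add_assoc] using this
  simpa using this.symm

open TensorProduct

noncomputable def Tmap (f : TensorProduct ℤ A B →+ AddCircle (1 : ℝ))
    (γA : A → AddCircle (1 : ℝ)) (γB : B → AddCircle (1 : ℝ)) :
    (A × B) → AddCircle (1 : ℝ) :=
  fun p => f (p.1 ⊗ₜ[ℤ] p.2) + γA p.1 + γB p.2

lemma polz_Tmap (f : TensorProduct ℤ A B →+ AddCircle (1 : ℝ))
    (γA : A → AddCircle (1 : ℝ)) (γB : B → AddCircle (1 : ℝ)) (x y : A × B) :
    polz (Tmap f γA γB) x y =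
      f (x.1 ⊗ₜ[ℤ] y.2) + f (y.1 ⊗ₜ[ℤ] x.2) + polz γA x.1 y.1 + polz γB x.2 y.2 := by
  simp only [polz, Tmap, Prod.fst_add, Prod.snd_add, add_tmul, tmul_add, map_add]
  abel

lemma Tmap_isQuadratic (f : TensorProduct ℤ A B →+ AddCircle (1 : ℝ))
    {γA : A → AddCircle (1 : ℝ)} {γB : B → AddCircle (1 : ℝ)}
    (hA : IsQuadratic γA) (hB : IsQuadratic γB) : IsQuadratic (Tmap f γA γB) := by
  refine ⟨fun p => ?_, fun x x' y => ?_, fun x y y' => ?_⟩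
  · simp only [Tmap, Prod.fst_neg, Prod.snd_neg, neg_tmul, tmul_neg, neg_neg,
      ← hA.1, ← hB.1]
  · simp only [polz_Tmap, Prod.fst_add, Prod.snd_add, add_tmul, tmul_add, map_add,
      hA.2.1, hB.2.1]
    abel
  · simp only [polz_Tmap, Prod.fst_add, Prod.snd_add, add_tmul, tmul_add, map_add,
      hA.2.2, hB.2.2]
    abel

lemma IsQuadratic.polz_zero_right {γ : A → B} (h : IsQuadratic γ) (x : A) :
    polz γ x 0 = 0 := by
  simp [polz, h.zero_eq]

lemma IsQuadratic.polz_zero_left {γ : A → B} (h : IsQuadratic γ) (y : A) :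
    polz γ 0 y = 0 := by
  simp [polz, h.zero_eq]

/-- The bilinear part of a quadratic form on `A × B`, as a biadditive map. -/
noncomputable def backBil (γ : (A × B) → AddCircle (1 : ℝ)) (h : IsQuadratic γ) :
    A →+ B →+ AddCircle (1 : ℝ) :=
  AddMonoidHom.mk'
    (fun a => AddMonoidHom.mk' (fun b => polz γ (a, 0) (0, b))
      (fun b b' => by
        have := h.2.2 (a, 0) (0, b) (0, b')
        simpa using this))
    (fun a a' => by
      ext b
      have := h.2.1 (a, 0) (a', 0) (0, b)
      simpa using this)

/-- Lift of the bilinear part to the tensor product. -/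
noncomputable def backF (γ : (A × B) → AddCircle (1 : ℝ)) (h : IsQuadratic γ) :
    TensorProduct ℤ A B →+ AddCircle (1 : ℝ) :=
  TensorProduct.liftAddHom (backBil γ h)
    (fun r a b => by
      rw [map_zsmul (backBil γ h) r a, AddMonoidHom.smul_apply,
        ← map_zsmul (backBil γ h a) r b])

@[simp] lemma backF_tmul (γ : (A × B) → AddCircle (1 : ℝ)) (h : IsQuadratic γ)
    (a : A) (b : B) : backF γ h (a ⊗ₜ[ℤ] b) = polz γ (a, 0) (0, b) := by
  simp [backF, backBil]

lemma isQuadratic_left (γ : (A × B) → AddCircle (1 : ℝ)) (h : IsQuadratic γ) :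
    IsQuadratic (fun a : A => γ (a, 0)) := by
  refine ⟨fun a => by simpa using h.1 (a, 0), fun x x' y => ?_, fun x y y' => ?_⟩
  · have := h.2.1 (x, 0) (x', 0) (y, 0)
    simpa [polz] using this
  · have := h.2.2 (x, 0) (y, 0) (y', 0)
    simpa [polz] using this

lemma isQuadratic_right (γ : (A × B) → AddCircle (1 : ℝ)) (h : IsQuadratic γ) :
    IsQuadratic (fun b : B => γ (0, b)) := by
  refine ⟨fun b => by simpa using h.1 (0, b), fun x x' y => ?_, fun x y y' => ?_⟩
  · have := h.2.1 ((0 : A), x) (0, x') (0, y)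
    simpa [polz] using this
  · have := h.2.2 ((0 : A), x) (0, y) (0, y')
    simpa [polz] using this

end Aux

open TensorProduct in
/-- `Hom(A⊗B, ℝ/ℤ) ⊕ Quad(A, ℝ/ℤ) ⊕ Quad(B, ℝ/ℤ) ≅ Quad(A⊕B, ℝ/ℤ)` via
`(f, γ_A, γ_B) ↦ ((a,b) ↦ f(a⊗b) + γ_A(a) + γ_B(b))`. -/
theorem quad_of_direct_sum_iso (A B : Type*) [AddCommGroup A] [AddCommGroup B] :
    ∃ e : ((TensorProduct ℤ A B →+ AddCircle (1 : ℝ)) × QuadGroup A × QuadGroup B) ≃+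
        QuadGroup (A × B),
      ∀ (f : TensorProduct ℤ A B →+ AddCircle (1 : ℝ)) (γA : QuadGroup A)
        (γB : QuadGroup B) (a : A) (b : B),
        ((e (f, γA, γB) : (A × B) → AddCircle (1 : ℝ)) (a, b)) =
          f (a ⊗ₜ[ℤ] b) + (γA : A → AddCircle (1 : ℝ)) a + (γB : B → AddCircle (1 : ℝ)) b := by
  classical
  refine ⟨AddEquiv.mk' (Equiv.mk
    (fun t => (⟨Tmap t.1 t.2.1.1 t.2.2.1, Tmap_isQuadratic t.1 t.2.1.2 t.2.2.2⟩ :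
      QuadGroup (A × B)))
    (fun γ => (backF γ.1 (id γ.2 : IsQuadratic γ.1), ⟨fun a => γ.1 (a, 0), isQuadratic_left γ.1 γ.2⟩,
      ⟨fun b => γ.1 (0, b), isQuadratic_right γ.1 γ.2⟩))
    ?_ ?_) ?_, fun f γA γB a b => rfl⟩
  · rintro ⟨f, γA, γB⟩
    have hq : IsQuadratic (Tmap f (γA : A → AddCircle (1:ℝ)) γB) :=
      Tmap_isQuadratic f γA.2 γB.2
    have hA0 : (γA : A → AddCircle (1:ℝ)) 0 = 0 := γA.2.zero_eq
    have hB0 : (γB : B → AddCircle (1:ℝ)) 0 = 0 := γB.2.zero_eq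
    refine Prod.ext ?_ (Prod.ext ?_ ?_)
    · ext x
      induction x using TensorProduct.induction_on with
      | zero => simp
      | tmul a b =>
        rw [backF_tmul]
        simp only [polz, Tmap, Prod.mk_add_mk, add_zero, zero_add, tmul_zero, zero_tmul,
          map_zero, hA0, hB0]
        abel
      | add x y hx hy => simp [map_add, hx, hy]
    · apply Subtype.ext
      funext a
      simp [Tmap, tmul_zero, hB0]
    · apply Subtype.ext
      funext b
      simp [Tmap, zero_tmul, hA0]
  · rintro ⟨γ, hγ⟩
    apply Subtype.ext
    funext p
    obtain ⟨a, b⟩ := p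
    simp only [Tmap, backF_tmul, polz, Prod.mk_add_mk, add_zero, zero_add]
    abel
  · rintro ⟨f, γA, γB⟩ ⟨f', γA', γB'⟩
    apply Subtype.ext
    funext p
    simp only [Equiv.coe_fn_mk, Prod.mk_add_mk, Tmap, AddMonoidHom.add_apply,
      AddSubgroup.coe_add, Pi.add_apply]
    abel
end

section
/- If A is a finite abelian group, then the number of quadratic forms from A to ℝ/ℤ equals |A/2A| · |S²(A)|, where S²(A) is the second symmetric power of A as a ℤ-module. -/
variable {A B : Type*} [AddCommGroup A] [AddCommGroup B]

/-- The subgroup `2A = {2a : a ∈ A}`. -/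
def twoSub (A : Type*) [AddCommGroup A] : AddSubgroup A :=
  (zsmulAddGroupHom 2 : A →+ A).range

open TensorProduct in
/-- The second symmetric power `S²(A) = (A ⊗ A)/⟨a⊗b - b⊗a⟩` of `A` as a ℤ-module. -/
abbrev symPower2 (A : Type*) [AddCommGroup A] :=
  (TensorProduct ℤ A A) ⧸
    (Submodule.span ℤ {x : TensorProduct ℤ A A | ∃ a b : A, x = a ⊗ₜ[ℤ] b - b ⊗ₜ[ℤ] a})

open AddCircle

noncomputable abbrev RZ := AddCircle (1 : ℝ)

noncomputable def toCircleEquiv : RZ ≃ Circle := (homeomorphCircle one_ne_zero).toEquiv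

lemma toCircleEquiv_apply (x : RZ) : toCircleEquiv x = toCircle x := homeomorphCircle_apply _ _

noncomputable def homAddCharEquiv (G : Type*) [AddCommGroup G] :
    (G →+ RZ) ≃ AddChar G Circle where
  toFun f :=
    { toFun := fun a => toCircle (f a)
      map_zero_eq_one' := by simp
      map_add_eq_mul' := fun a b => by simp only [map_add, toCircle_add] }
  invFun ψ := AddMonoidHom.mk' (fun a => toCircleEquiv.symm (ψ a)) (fun a b => by
    apply injective_toCircle one_ne_zero
    rw [toCircle_add, ← toCircleEquiv_apply, ← toCircleEquiv_apply, ← toCircleEquiv_apply,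
      Equiv.apply_symm_apply, Equiv.apply_symm_apply, Equiv.apply_symm_apply, AddChar.map_add_eq_mul])
  left_inv f := by
    ext a
    show toCircleEquiv.symm (toCircle (f a)) = f a
    rw [← toCircleEquiv_apply, Equiv.symm_apply_apply]
  right_inv ψ := by
    apply AddChar.ext
    intro a
    show toCircle (toCircleEquiv.symm (ψ a)) = ψ a
    rw [← toCircleEquiv_apply, Equiv.apply_symm_apply]

lemma card_hom_RZ (G : Type*) [AddCommGroup G] [Finite G] :
    Nat.card (G →+ RZ) = Nat.card G := by
  cases nonempty_fintype G
  rw [Nat.card_congr ((homAddCharEquiv G).trans (AddChar.circleEquivComplex).toEquiv)]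
  have h := AddChar.card_eq (α := G)
  rwa [← Nat.card_eq_fintype_card, ← Nat.card_eq_fintype_card] at h

/-- Surjectivity property: every symmetric biadditive form is the polarization of a quadratic
form. -/
def QSurj (G : Type*) [AddCommGroup G] : Prop :=
  ∀ b : G →+ G →+ RZ, (∀ x y, b x y = b y x) →
    ∃ γ : G → RZ, IsQuadratic γ ∧ ∀ x y, polz γ x y = b x y

lemma isQuadratic_of_polz_eq {G : Type*} [AddCommGroup G] (γ : G → RZ) (b : G →+ G →+ RZ)
    (heven : ∀ a, γ a = γ (-a)) (h : ∀ x y, polz γ x y = b x y) : IsQuadratic γ :=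
  ⟨heven, fun x x' y => by rw [h, h, h, map_add, AddMonoidHom.add_apply],
    fun x y y' => by rw [h, h, h, map_add]⟩

/-- Restriction of a biadditive form along a hom. -/
noncomputable def compBoth {G H : Type*} [AddCommGroup G] [AddCommGroup H] (b : H →+ H →+ RZ) (f : G →+ H) :
    G →+ G →+ RZ :=
  AddMonoidHom.mk' (fun x => (b (f x)).comp f) (fun x y => by ext z; simp)

@[simp] lemma compBoth_apply {G H : Type*} [AddCommGroup G] [AddCommGroup H] (b : H →+ H →+ RZ)
    (f : G →+ H) (x y : G) : compBoth b f x y = b (f x) (f y) := rfl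

lemma QSurj.of_addEquiv {G H : Type*} [AddCommGroup G] [AddCommGroup H] (e : G ≃+ H)
    (hG : QSurj G) : QSurj H := by
  intro b hb
  obtain ⟨γ, hγ, hpol⟩ := hG (compBoth b e.toAddMonoidHom) (fun x y => by simp [hb])
  have key : ∀ x y, polz (γ ∘ e.symm) x y = b x y := by
    intro x y
    have : polz (γ ∘ e.symm) x y = polz γ (e.symm x) (e.symm y) := by
      simp [polz, map_add]
    rw [this, hpol]
    simp
  exact ⟨γ ∘ e.symm, isQuadratic_of_polz_eq _ b
    (fun a => by simp only [Function.comp_apply, map_neg]; exact hγ.1 (e.symm a)) key, key⟩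

lemma QSurj.of_subsingleton {G : Type*} [AddCommGroup G] [Subsingleton G] : QSurj G := by
  intro b hb
  have key : ∀ x y : G, polz (0 : G → RZ) x y = b x y := by
    intro x y
    rw [Subsingleton.elim x 0, map_zero]
    simp [polz]
  exact ⟨0, isQuadratic_of_polz_eq _ b (fun a => rfl) key, key⟩

lemma intCoe_RZ_zero (k : ℤ) : ((k : ℝ) : RZ) = 0 := by
  rw [AddCircle.coe_eq_zero_iff]; exact ⟨k, by simp⟩

lemma coe_RZ_zsmul (k : ℤ) (r : ℝ) : ((((k : ℝ) * r : ℝ)) : RZ) = k • ((r : ℝ) : RZ) := by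
  rw [← zsmul_eq_mul]
  exact map_zsmul (QuotientAddGroup.mk' (AddSubgroup.zmultiples (1:ℝ))) k r

lemma coe_RZ_eq_zero_of_int (x : ℝ) (k : ℤ) (h : x = (k : ℝ)) : ((x : ℝ) : RZ) = 0 := by
  rw [h]; exact intCoe_RZ_zero k

lemma qsurj_zmod (n : ℕ) [NeZero n] : QSurj (ZMod n) := by
  intro b hb
  set t : RZ := b 1 1 with ht
  have hval : ∀ x : ZMod n, ((x.val : ℤ) : ZMod n) = x := by
    intro x
    push_cast
    rw [ZMod.natCast_val, ZMod.cast_id]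
  have hone : ∀ x : ZMod n, x = (x.val : ℤ) • (1 : ZMod n) := by
    intro x
    rw [zsmul_eq_mul, mul_one, hval]
  have hnt : (n : ℤ) • t = 0 := by
    have h0 : ((n : ℤ) • (1 : ZMod n)) = 0 := by
      rw [zsmul_eq_mul, mul_one]
      push_cast
      exact ZMod.natCast_self n
    calc (n : ℤ) • t = b ((n : ℤ) • 1) 1 := by rw [map_zsmul]; rfl
    _ = 0 := by rw [h0, map_zero]; rfl
  -- lift t to a real number
  obtain ⟨r, hr⟩ := QuotientAddGroup.mk_surjective t
  have hrt : ((r : ℝ) : RZ) = t := hr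
  obtain ⟨m, hm⟩ : ∃ m : ℤ, (m : ℝ) = ((n : ℤ) : ℝ) * r := by
    have h1 : (((((n : ℤ) : ℝ)) * r : ℝ) : RZ) = 0 := by
      rw [coe_RZ_zsmul, hrt]
      exact hnt
    rw [AddCircle.coe_eq_zero_iff] at h1
    obtain ⟨k, hk⟩ := h1
    refine ⟨k, ?_⟩
    have := hk
    simpa [smul_eq_mul] using this
  -- choose the half
  set s : ℝ := if Even ((n : ℤ) * m) then r / 2 else (r + 1) / 2 with hs
  set β : RZ := ((s : ℝ) : RZ) with hβ
  have h2β : (2 : ℤ) • β = t := by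
    rw [hβ, ← coe_RZ_zsmul]
    by_cases hpar : Even ((n : ℤ) * m) <;>
      simp only [hs, hpar, if_true, if_false, reduceIte]
    · rw [show (((2:ℤ):ℝ)) * (r/2) = r by push_cast; ring, hrt]
    · rw [show (((2:ℤ):ℝ)) * ((r+1)/2) = r + 1 by push_cast; ring]
      have hadd : ((r + 1 : ℝ) : RZ) = ((r:ℝ) : RZ) + ((1:ℝ) : RZ) :=
        map_add (QuotientAddGroup.mk' (AddSubgroup.zmultiples (1:ℝ))) r 1
      have h1z : (((1:ℝ)) : RZ) = 0 := by simpa using intCoe_RZ_zero 1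
      rw [hadd, h1z, add_zero, hrt]
  have hn2β : ((n : ℤ) * (n : ℤ)) • β = 0 := by
    rw [hβ, ← coe_RZ_zsmul]
    by_cases hpar : Even ((n : ℤ) * m) <;>
      simp only [hs, hpar, if_true, if_false, reduceIte]
    · obtain ⟨k, hk⟩ := hpar
      refine coe_RZ_eq_zero_of_int _ k ?_
      have hk' : (((n:ℤ) * m : ℤ) : ℝ) = ((k + k : ℤ) : ℝ) := by rw [hk]
      have hm' := hm
      push_cast at hk' hm' ⊢
      linear_combination (-(n:ℝ)/2) * hm' + (1/2 : ℝ) * hk'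
    · have hodd : Odd ((n : ℤ) * m) := Int.not_even_iff_odd.mp hpar
      have hnodd : Odd (n : ℤ) := (Int.odd_mul.mp hodd).1
      have hmodd : Odd m := (Int.odd_mul.mp hodd).2
      obtain ⟨k, hk⟩ : Even (m + (n : ℤ)) := Odd.add_odd hmodd hnodd
      refine coe_RZ_eq_zero_of_int _ ((n:ℤ) * k) ?_
      have hk' : ((m + (n:ℤ) : ℤ) : ℝ) = ((k + k : ℤ) : ℝ) := by rw [hk]
      have hm' := hm
      push_cast at hk' hm' ⊢
      linear_combination (-(n:ℝ)/2) * hm' + ((n:ℝ)/2) * hk'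
  have h2nβ : ((2 : ℤ) * (n : ℤ)) • β = 0 := by
    rw [mul_comm, mul_smul, h2β, hnt]
  -- congruence key
  have key : ∀ a c : ℤ, ((a : ZMod n) = (c : ZMod n)) → a ^ 2 • β = c ^ 2 • β := by
    intro a c h
    obtain ⟨k, hk⟩ : (n : ℤ) ∣ (a - c) := by
      rw [← ZMod.intCast_zmod_eq_zero_iff_dvd]
      push_cast
      rw [h, sub_self]
    have ha : a = c + (n : ℤ) * k := by linarith [hk]
    subst ha
    have expand : (c + (n : ℤ) * k) ^ 2
        = c ^ 2 + (c * k) * ((2:ℤ) * n) + (k * k) * ((n:ℤ) * n) := by ring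
    have e1 : ((c * k) * ((2:ℤ) * n)) • β = 0 := by rw [mul_smul, h2nβ, smul_zero]
    have e2 : ((k * k) * ((n:ℤ) * n)) • β = 0 := by rw [mul_smul, hn2β, smul_zero]
    rw [expand, add_smul, add_smul, e1, e2, add_zero, add_zero]
  -- the quadratic form
  set γ : ZMod n → RZ := fun x => ((x.val : ℤ)) ^ 2 • β with hγ
  have hb1 : ∀ x y : ZMod n, b x y = ((x.val : ℤ) * (y.val : ℤ)) • t := by
    intro x y
    conv_lhs => rw [hone x, hone y]
    rw [map_zsmul, map_zsmul b ((x.val : ℤ)) 1, AddMonoidHom.smul_apply, ← ht, mul_smul,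
      smul_comm]
  have hpol : ∀ x y, polz γ x y = b x y := by
    intro x y
    have hxy : ((((x + y).val : ℤ)) : ZMod n) = (((x.val : ℤ) + (y.val : ℤ) : ℤ) : ZMod n) := by
      push_cast [hval]
      rfl
    have e1 : γ (x + y) = ((x.val : ℤ) + (y.val : ℤ)) ^ 2 • β := key _ _ hxy
    rw [polz, e1, hb1, hγ]
    have expand : ((x.val : ℤ) + (y.val : ℤ)) ^ 2
        = (x.val : ℤ) ^ 2 + (y.val : ℤ) ^ 2 + ((x.val : ℤ) * (y.val : ℤ)) * 2 := by ring
    rw [expand, add_smul, add_smul, mul_smul, h2β]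
    abel
  have heven : ∀ a : ZMod n, γ a = γ (-a) := by
    intro a
    have h : ((((-a).val : ℤ)) : ZMod n) = (((-(a.val : ℤ)) : ℤ) : ZMod n) := by
      push_cast [hval]
      rfl
    have hkey := key _ _ h
    rw [neg_pow, show ((-1:ℤ)^2 : ℤ) = 1 by ring, one_mul] at hkey
    exact hkey.symm
  exact ⟨γ, isQuadratic_of_polz_eq γ b heven hpol, hpol⟩

lemma QSurj.prod {G H : Type*} [AddCommGroup G] [AddCommGroup H] (hG : QSurj G) (hH : QSurj H) :
    QSurj (G × H) := by
  intro b hb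
  obtain ⟨γG, hγG, hpolG⟩ := hG (compBoth b (AddMonoidHom.inl G H)) (fun x y => by simp [hb])
  obtain ⟨γH, hγH, hpolH⟩ := hH (compBoth b (AddMonoidHom.inr G H)) (fun x y => by simp [hb])
  set γ : G × H → RZ :=
    fun p => γG p.1 + γH p.2 + b (AddMonoidHom.inl G H p.1) (AddMonoidHom.inr G H p.2) with hγ
  have key : ∀ p q : G × H, polz γ p q = b p q := by
    intro p q
    have hp : p = AddMonoidHom.inl G H p.1 + AddMonoidHom.inr G H p.2 := by
      ext <;> simp
    have hq : q = AddMonoidHom.inl G H q.1 + AddMonoidHom.inr G H q.2 := by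
      ext <;> simp
    have e1 : polz γG p.1 q.1 = b (AddMonoidHom.inl G H p.1) (AddMonoidHom.inl G H q.1) :=
      hpolG p.1 q.1
    have e2 : polz γH p.2 q.2 = b (AddMonoidHom.inr G H p.2) (AddMonoidHom.inr G H q.2) :=
      hpolH p.2 q.2
    have lhs : polz γ p q = polz γG p.1 q.1 + polz γH p.2 q.2
        + (b (AddMonoidHom.inl G H (p.1 + q.1)) (AddMonoidHom.inr G H (p.2 + q.2))
          - b (AddMonoidHom.inl G H p.1) (AddMonoidHom.inr G H p.2)
          - b (AddMonoidHom.inl G H q.1) (AddMonoidHom.inr G H q.2)) := by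
      simp only [polz, hγ, Prod.fst_add, Prod.snd_add]
      abel
    rw [lhs, e1, e2]
    conv_rhs => rw [hp, hq]
    simp only [map_add, AddMonoidHom.add_apply]
    rw [hb (AddMonoidHom.inr G H p.2) (AddMonoidHom.inl G H q.1)]
    abel
  have heven : ∀ p : G × H, γ p = γ (-p) := by
    intro p
    simp only [hγ, Prod.fst_neg, Prod.snd_neg, map_neg, AddMonoidHom.neg_apply, neg_neg]
    rw [← hγG.1 p.1, ← hγH.1 p.2]
  exact ⟨γ, isQuadratic_of_polz_eq γ b heven key, key⟩

lemma qsurj_pi {ι : Type} [Fintype ι] (M : ι → Type) [∀ i, AddCommGroup (M i)]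
    (h : ∀ i, QSurj (M i)) : QSurj (∀ i, M i) := by
  classical
  revert M h
  refine Fintype.induction_empty_option
    (P := fun ι _ => ∀ (M : ι → Type) [∀ i, AddCommGroup (M i)],
      (∀ i, QSurj (M i)) → QSurj (∀ i, M i)) ?_ ?_ ?_ ι
  · intro α β _ e hα M _ hM
    have h1 : QSurj (∀ a : α, M (e a)) := hα (fun a => M (e a)) (fun a => hM (e a))
    exact QSurj.of_addEquiv (LinearEquiv.piCongrLeft ℤ M e).toAddEquiv h1
  · intro M _ _
    exact QSurj.of_subsingleton
  · intro α _ hα M _ hM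
    have h1 : QSurj (M none × ∀ a : α, M (some a)) :=
      (hM none).prod (hα (fun a => M (some a)) (fun a => hM (some a)))
    have e : (M none × ∀ a : α, M (some a)) ≃+ (∀ i, M i) :=
      { (Equiv.piOptionEquivProd (β := M)).symm with
        map_add' := fun p q => by
          funext i
          cases i <;> rfl }
    exact QSurj.of_addEquiv e h1

lemma qsurj_of_finite (G : Type*) [AddCommGroup G] [Finite G] : QSurj G := by
  obtain ⟨ι, hι, n, hn, ⟨e⟩⟩ := AddCommGroup.equiv_directSum_zmod_of_finite' G
  have : ∀ i, NeZero (n i) := fun i => ⟨by have := hn i; omega⟩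
  have hπ : QSurj (∀ i, ZMod (n i)) := qsurj_pi _ (fun i => qsurj_zmod (n i))
  have e2 : (DirectSum ι fun i => ZMod (n i)) ≃+ (∀ i, ZMod (n i)) :=
    { DFinsupp.equivFunOnFintype with
      map_add' := fun f g => by
        funext i
        simp only [DFinsupp.equivFunOnFintype]
        rfl }
  exact QSurj.of_addEquiv (e.trans e2).symm hπ

section Assembly

open TensorProduct

variable {A : Type*} [AddCommGroup A]

lemma polz_swap (γ : A → RZ) (a c : A) : polz γ a c = polz γ c a := by
  rw [polz, polz, add_comm a c]
  abel

/-- The polarization as a biadditive map. -/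
noncomputable def quadB (γ : A → RZ) (h : IsQuadratic γ) : A →+ A →+ RZ :=
  AddMonoidHom.mk' (fun x => AddMonoidHom.mk' (fun y => polz γ x y) (h.2.2 x))
    (fun x x' => AddMonoidHom.ext fun y => h.2.1 x x' y)

@[simp] lemma quadB_apply (γ : A → RZ) (h : IsQuadratic γ) (x y : A) :
    quadB γ h x y = polz γ x y := rfl

noncomputable def polTensor (γ : A → RZ) (h : IsQuadratic γ) : TensorProduct ℤ A A →+ RZ :=
  TensorProduct.liftAddHom (quadB γ h) (fun r x y => by
    rw [map_zsmul (quadB γ h) r x, AddMonoidHom.smul_apply, ← map_zsmul (quadB γ h x) r y])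

@[simp] lemma polTensor_tmul (γ : A → RZ) (h : IsQuadratic γ) (a c : A) :
    polTensor γ h (a ⊗ₜ[ℤ] c) = polz γ a c :=
  TensorProduct.liftAddHom_tmul _ _ a c

noncomputable def polLin (γ : A → RZ) (h : IsQuadratic γ) : symPower2 A →ₗ[ℤ] RZ :=
  Submodule.liftQ _ (polTensor γ h).toIntLinearMap (by
    rw [Submodule.span_le]
    rintro x ⟨a, c, rfl⟩
    simp only [SetLike.mem_coe, LinearMap.mem_ker, map_sub,
      AddMonoidHom.coe_toIntLinearMap, polTensor_tmul]
    rw [polz_swap γ a c, sub_self])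

@[simp] lemma polLin_mk (γ : A → RZ) (h : IsQuadratic γ) (a c : A) :
    polLin γ h (Submodule.Quotient.mk (a ⊗ₜ[ℤ] c)) = polz γ a c := by
  rw [polLin, Submodule.liftQ_apply]
  simp

lemma symPower2_hom_ext {f g : symPower2 A →ₗ[ℤ] RZ}
    (h : ∀ a c : A, f (Submodule.Quotient.mk (a ⊗ₜ[ℤ] c))
      = g (Submodule.Quotient.mk (a ⊗ₜ[ℤ] c))) : f = g := by
  refine LinearMap.ext fun x => ?_
  obtain ⟨y, rfl⟩ := Submodule.Quotient.mk_surjective _ x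
  induction y using TensorProduct.induction_on with
  | zero => simp
  | tmul a c => exact h a c
  | add u v hu hv =>
      rw [Submodule.Quotient.mk_add, map_add, map_add, hu, hv]

/-- The polarization homomorphism from quadratic forms to symmetric forms. -/
noncomputable def pol (A : Type*) [AddCommGroup A] :
    QuadGroup A →+ (symPower2 A →ₗ[ℤ] RZ) :=
  AddMonoidHom.mk' (fun γ => polLin (γ : A → RZ) γ.2) (fun γ γ' => symPower2_hom_ext fun a c => by
    erw [polLin_mk, LinearMap.add_apply, polLin_mk, polLin_mk]
    exact polz_add_fun _ _ a c)

lemma pol_apply (γ : QuadGroup A) : pol A γ = polLin (γ : A → RZ) γ.2 := rfl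

lemma pol_ker_iff (γ : QuadGroup A) :
    γ ∈ (pol A).ker ↔ ∀ x y, polz (γ : A → RZ) x y = 0 := by
  rw [AddMonoidHom.mem_ker]
  constructor
  · intro h x y
    have h2 := congrArg (fun f => f (Submodule.Quotient.mk (x ⊗ₜ[ℤ] y))) h
    rw [pol_apply] at h2
    erw [polLin_mk] at h2
    simpa using h2
  · intro h
    rw [pol_apply]
    exact symPower2_hom_ext fun a c => by
      erw [polLin_mk, h]
      simp

lemma pol_surjective [Finite A] : Function.Surjective (pol A) := by
  intro L
  set b : A →+ A →+ RZ :=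
    AddMonoidHom.mk' (fun x => AddMonoidHom.mk'
        (fun y => L (Submodule.Quotient.mk (x ⊗ₜ[ℤ] y)))
        (fun y y' => by simp only [TensorProduct.tmul_add, Submodule.Quotient.mk_add, map_add]))
      (fun x x' => AddMonoidHom.ext fun y => by
        simp only [AddMonoidHom.mk'_apply, AddMonoidHom.add_apply]
        rw [TensorProduct.add_tmul, Submodule.Quotient.mk_add, map_add]) with hb
  have hsym : ∀ x y, b x y = b y x := by
    intro x y
    show L _ = L _
    congr 1
    rw [Submodule.Quotient.eq]
    exact Submodule.subset_span ⟨x, y, rfl⟩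
  obtain ⟨γ, hγ, hpol⟩ := qsurj_of_finite A b hsym
  refine ⟨⟨γ, hγ⟩, symPower2_hom_ext fun a c => ?_⟩
  rw [pol_apply]
  erw [polLin_mk]
  exact hpol a c

lemma ker_additive {γ : QuadGroup A} (hγ : γ ∈ (pol A).ker) (x y : A) :
    (γ : A → RZ) (x + y) = (γ : A → RZ) x + (γ : A → RZ) y := by
  have h := (pol_ker_iff γ).mp hγ x y
  rw [polz, sub_sub, sub_eq_zero] at h
  exact h

lemma ker_zero {γ : QuadGroup A} (hγ : γ ∈ (pol A).ker) : (γ : A → RZ) 0 = 0 := by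
  have h := ker_additive hγ 0 0
  rw [add_zero] at h
  exact (left_eq_add.mp h)

lemma ker_neg {γ : QuadGroup A} (hγ : γ ∈ (pol A).ker) (a : A) :
    (γ : A → RZ) (-a) = - (γ : A → RZ) a := by
  have h := ker_additive hγ a (-a)
  rw [add_neg_cancel, ker_zero hγ] at h
  exact (eq_neg_of_add_eq_zero_right h.symm)

lemma ker_double {γ : QuadGroup A} (hγ : γ ∈ (pol A).ker) (a : A) :
    (γ : A → RZ) (a + a) = 0 := by
  have heven : (γ : A → RZ) a = (γ : A → RZ) (-a) := (γ.2 : IsQuadratic _).1 a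
  rw [ker_neg hγ] at heven
  rw [ker_additive hγ a a]
  nth_rewrite 1 [heven]
  rw [neg_add_cancel]

/-- Homomorphisms of `A ⧸ 2A` give quadratic forms with zero polarization. -/
noncomputable def homToKer (f : (A ⧸ twoSub A) →+ RZ) : (pol A).ker := by
  have hz : ∀ x y : A, polz (fun a => f (QuotientAddGroup.mk a)) x y = 0 := by
    intro x y
    simp only [polz, QuotientAddGroup.mk_add, map_add]
    abel
  refine ⟨⟨fun a => f (QuotientAddGroup.mk a), ?_, ?_, ?_⟩, ?_⟩
  · intro a
    have h2 : ((QuotientAddGroup.mk (a + a) : A ⧸ twoSub A)) = 0 := by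
      rw [QuotientAddGroup.eq_zero_iff]
      exact ⟨a, two_zsmul a⟩
    have hdbl : f (QuotientAddGroup.mk a) + f (QuotientAddGroup.mk a) = 0 := by
      rw [← map_add, ← QuotientAddGroup.mk_add, h2, map_zero]
    show f _ = f (QuotientAddGroup.mk (-a))
    rw [QuotientAddGroup.mk_neg, map_neg]
    exact (neg_eq_of_add_eq_zero_left hdbl).symm
  · intro x x' y
    rw [hz, hz, hz, add_zero]
  · intro x y y'
    rw [hz, hz, hz, add_zero]
  · rw [pol_ker_iff]
    exact hz

/-- The kernel of the polarization map is equivalent to `Hom(A ⧸ 2A, ℝ/ℤ)`. -/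
noncomputable def kerEquiv (A : Type*) [AddCommGroup A] :
    ((pol A).ker) ≃ ((A ⧸ twoSub A) →+ RZ) where
  toFun γ :=
    QuotientAddGroup.lift (twoSub A)
      (AddMonoidHom.mk' ((γ : QuadGroup A) : A → RZ) (ker_additive γ.2))
      (by
        rintro x ⟨a, rfl⟩
        show ((γ : QuadGroup A) : A → RZ) ((2:ℤ) • a) = 0
        rw [two_zsmul]
        exact ker_double γ.2 a)
  invFun := homToKer
  left_inv γ := by
    apply Subtype.ext
    apply Subtype.ext
    funext a
    rfl
  right_inv f := by
    apply AddMonoidHom.ext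
    intro x
    induction x using QuotientAddGroup.induction_on with
    | H a => rfl

lemma finite_tensor (A : Type*) [AddCommGroup A] [Finite A] :
    Finite (TensorProduct ℤ A A) := by
  have hN : 0 < Nat.card A := Nat.card_pos
  have hkill : ∀ x : TensorProduct ℤ A A, (Nat.card A) • x = 0 := by
    intro x
    induction x using TensorProduct.induction_on with
    | zero => simp
    | tmul a c =>
        rw [← natCast_zsmul, TensorProduct.smul_tmul', natCast_zsmul, card_nsmul_eq_zero',
          TensorProduct.zero_tmul]
    | add u v hu hv => rw [smul_add, hu, hv, add_zero]
  have htor : AddMonoid.IsTorsion (TensorProduct ℤ A A) := fun x =>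
    isOfFinAddOrder_iff_nsmul_eq_zero.mpr ⟨Nat.card A, hN, hkill x⟩
  have hfin : Module.Finite ℤ (TensorProduct ℤ A A) := Module.Finite.tensorProduct ℤ A A
  have hfg : AddGroup.FG (TensorProduct ℤ A A) := Module.Finite.iff_addGroup_fg.mp hfin
  exact AddCommGroup.finite_of_fg_torsion _ htor

end Assembly

/-- For a finite abelian group `A`, `|Quad(A, ℝ/ℤ)| = |A/2A| · |S²(A)|`. -/
theorem card_quadGroup (A : Type*) [AddCommGroup A] [Finite A] :
    Nat.card (QuadGroup A) = Nat.card (A ⧸ twoSub A) * Nat.card (symPower2 A) := by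
  have hT : Finite (TensorProduct ℤ A A) := finite_tensor A
  have hS : Finite (symPower2 A) :=
    Finite.of_surjective _ (Submodule.Quotient.mk_surjective
      (Submodule.span ℤ {x : TensorProduct ℤ A A | ∃ a b : A, x = a ⊗ₜ[ℤ] b - b ⊗ₜ[ℤ] a}))
  have hQ : Finite (A ⧸ twoSub A) := Quotient.finite _
  have h1 : Nat.card (QuadGroup A ⧸ (pol A).ker) = Nat.card (symPower2 A) := by
    rw [Nat.card_congr
      (QuotientAddGroup.quotientKerEquivOfSurjective (pol A) (pol_surjective)).toEquiv,
      Nat.card_congr ((addMonoidHomLequivInt (A := symPower2 A) (B := RZ) ℤ).toEquiv.symm),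
      card_hom_RZ]
  have h2 : Nat.card ((pol A).ker) = Nat.card (A ⧸ twoSub A) := by
    rw [Nat.card_congr (kerEquiv A), card_hom_RZ]
  rw [AddSubgroup.card_eq_card_quotient_mul_card_addSubgroup ((pol A).ker), h1, h2, mul_comm]
end

section
/- For a finite abelian group A, there is a short exact sequence 0 → Hom(S²(A), ℝ/ℤ) → Quad(A, ℝ/ℤ) → A/2A → 0, where the quotient Quad(A, ℝ/ℤ)/Quad₀(A, ℝ/ℤ) is isomorphic to A/2A. -/
variable {A B : Type*} [AddCommGroup A] [AddCommGroup B]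

/-- The subgroup `Quad₀(A,ℝ/ℤ)` of quadratic forms with `o(a)·q(a) = 0` for all `a`. -/
noncomputable def quadGroup0 (A : Type*) [AddCommGroup A] :
    AddSubgroup (A → AddCircle (1 : ℝ)) where
  carrier := {γ | IsQuadratic γ ∧ ∀ a : A, addOrderOf a • γ a = 0}
  zero_mem' := ⟨(QuadGroup A).zero_mem, fun a => smul_zero _⟩
  add_mem' := by
    rintro f g ⟨hf, hf0⟩ ⟨hg, hg0⟩
    exact ⟨(QuadGroup A).add_mem hf hg,
      fun a => by simp only [Pi.add_apply, smul_add, hf0 a, hg0 a, add_zero]⟩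
  neg_mem' := by
    rintro f ⟨hf, hf0⟩
    exact ⟨(QuadGroup A).neg_mem hf,
      fun a => by simp only [Pi.neg_apply, smul_neg, hf0 a, neg_zero]⟩

/-- `Quad₀(A)` viewed as a subgroup of `Quad(A)`. -/
noncomputable def quadGroup0' (A : Type*) [AddCommGroup A] : AddSubgroup (QuadGroup A) :=
  (quadGroup0 A).comap (QuadGroup A).subtype


/-! ### Auxiliary machinery -/

namespace QuadAux

local notation "T" => AddCircle (1 : ℝ)

section Basic

variable {A B : Type*} [AddCommGroup A] [AddCommGroup B]

lemma polz_def (q : A → B) (x y : A) : q (x + y) = polz q x y + q x + q y := by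
  simp only [polz]; abel

lemma polz_comm (q : A → B) (x y : A) : polz q x y = polz q y x := by
  simp only [polz, add_comm]; abel

lemma polz_zero_left {q : A → B} (h : IsQuadratic q) (y : A) : polz q 0 y = 0 := by
  have h1 := (h.2.1 0 0 y).symm
  rw [add_zero] at h1
  rwa [add_eq_left] at h1

lemma polz_zero_right {q : A → B} (h : IsQuadratic q) (x : A) : polz q x 0 = 0 := by
  rw [polz_comm]
  exact polz_zero_left h x

lemma quad_zero {q : A → B} (h : IsQuadratic q) : q 0 = 0 := by
  have h0 := polz_zero_left h 0
  simp only [polz, add_zero, sub_self, zero_sub, neg_eq_zero] at h0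
  exact h0

lemma polz_nsmul_left {q : A → B} (h : IsQuadratic q) (k : ℕ) (x y : A) :
    polz q (k • x) y = k • polz q x y := by
  induction k with
  | zero => simpa using polz_zero_left h y
  | succ n ih => rw [succ_nsmul, h.2.1, ih, succ_nsmul]

lemma polz_diag {q : A → B} (h : IsQuadratic q) (a : A) :
    polz q a a = q a + q a := by
  have h1 : polz q (a + -a) a = polz q a a + polz q (-a) a := h.2.1 a (-a) a
  rw [add_neg_cancel, polz_zero_left h] at h1
  have h2 : polz q (-a) a = -(q a + q a) := by
    simp only [polz, neg_add_cancel, quad_zero h, ← h.1 a]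
    abel
  rw [h2] at h1
  have h3 := eq_neg_of_add_eq_zero_left h1.symm
  rw [h3]; abel

lemma quad_nsmul {q : A → B} (h : IsQuadratic q) (k : ℕ) (a : A) :
    q (k • a) = (k * k) • q a := by
  induction k with
  | zero => simpa using quad_zero h
  | succ n ih =>
      rw [succ_nsmul, polz_def q (n • a) a, polz_nsmul_left h, polz_diag h, ih]
      have hr : (n + 1) * (n + 1) = n * n + (n + n) + 1 := by ring
      rw [hr, add_nsmul, add_nsmul, add_nsmul, one_nsmul, smul_add]
      abel

lemma quad_two_orderOf_smul {q : A → B} (h : IsQuadratic q) (a : A) :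
    addOrderOf a • (q a + q a) = 0 := by
  rw [← polz_diag h, ← polz_nsmul_left h, addOrderOf_nsmul_eq_zero, polz_zero_left h]

lemma quad_comp {q : B → T} (h : IsQuadratic q) (f : A →+ B) :
    IsQuadratic (q ∘ f) := by
  have hp : ∀ x y, polz (q ∘ f) x y = polz q (f x) (f y) := by
    intro x y; simp [polz, map_add]
  refine ⟨fun a => ?_, fun x x' y => ?_, fun x y y' => ?_⟩
  · show q (f a) = q (f (-a))
    rw [map_neg]; exact h.1 (f a)
  · rw [hp, hp, hp, map_add, h.2.1]
  · rw [hp, hp, hp, map_add, h.2.2]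

lemma polz_comp {q : B → T} (f : A →+ B) (x y : A) :
    polz (q ∘ f) x y = polz q (f x) (f y) := by
  simp [polz, map_add]

end Basic

end QuadAux

namespace QuadAux

section Circle

noncomputable abbrev half : AddCircle (1 : ℝ) := ((1/2 : ℝ) : AddCircle (1 : ℝ))

lemma half_ne_zero : half ≠ 0 := by
  intro h
  rw [AddCircle.coe_eq_zero_iff] at h
  obtain ⟨n, hn⟩ := h
  rw [zsmul_eq_mul, mul_one] at hn
  have h3 : ((2 * n : ℤ) : ℝ) = ((1 : ℤ) : ℝ) := by push_cast; linarith
  have h4 : (2 * n : ℤ) = 1 := Int.cast_injective h3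
  omega

lemma half_add_half : half + half = 0 := by
  rw [show half + half = (((1/2 : ℝ) + (1/2 : ℝ) : ℝ) : AddCircle (1:ℝ)) from rfl,
    show (1/2 : ℝ) + (1/2 : ℝ) = (1 : ℝ) by norm_num]
  exact AddCircle.coe_period 1

lemma two_torsion_cases (x : AddCircle (1 : ℝ)) (h : x + x = 0) : x = 0 ∨ x = half := by
  induction x using QuotientAddGroup.induction_on with
  | H r =>
  have h2 : ((r + r : ℝ) : AddCircle (1:ℝ)) = 0 := h
  rw [AddCircle.coe_eq_zero_iff] at h2
  obtain ⟨n, hn⟩ := h2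
  rw [zsmul_eq_mul, mul_one] at hn
  rcases Int.even_or_odd n with ⟨m, hm⟩ | ⟨m, hm⟩
  · left
    rw [AddCircle.coe_eq_zero_iff]
    exact ⟨m, by rw [zsmul_eq_mul, mul_one]; subst hm; push_cast at hn ⊢; linarith⟩
  · right
    have hr : r - 1/2 = (m : ℝ) := by subst hm; push_cast at hn ⊢; linarith
    have hz : ((r - 1/2 : ℝ) : AddCircle (1:ℝ)) = 0 := by
      rw [hr, AddCircle.coe_eq_zero_iff]
      exact ⟨m, by rw [zsmul_eq_mul, mul_one]⟩
    rw [AddCircle.coe_sub] at hz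
    exact sub_eq_zero.mp hz

lemma two_torsion_cases' (x : AddCircle (1 : ℝ)) (h : (2 : ℕ) • x = 0) : x = 0 ∨ x = half :=
  two_torsion_cases x (by rw [← two_nsmul]; exact h)

end Circle

end QuadAux

namespace QuadAux

local notation "T" => AddCircle (1 : ℝ)

section SymBil

variable (A : Type*) [AddCommGroup A]

/-- Symmetric bilinear forms with values in `ℝ/ℤ` as a subgroup of bihoms. -/
noncomputable def symBil : AddSubgroup (A →+ A →+ AddCircle (1 : ℝ)) where
  carrier := {B | ∀ x y, B x y = B y x}
  zero_mem' := by intro x y; rfl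
  add_mem' := by intro f g hf hg x y; simp only [AddMonoidHom.add_apply, hf x y, hg x y]
  neg_mem' := by intro f hf x y; simp only [AddMonoidHom.neg_apply, hf x y]

variable {A}

open TensorProduct

lemma symPower2_mk_comm (a b : A) :
    (Submodule.Quotient.mk (a ⊗ₜ[ℤ] b) : symPower2 A) = Submodule.Quotient.mk (b ⊗ₜ[ℤ] a) :=
  (Submodule.Quotient.eq _).mpr (Submodule.subset_span ⟨a, b, rfl⟩)

lemma symPower2_hom_ext {f g : symPower2 A →+ T}
    (h : ∀ a b : A, f (Submodule.Quotient.mk (a ⊗ₜ[ℤ] b)) = g (Submodule.Quotient.mk (a ⊗ₜ[ℤ] b))) :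
    f = g := by
  ext x
  obtain ⟨y, rfl⟩ := Submodule.Quotient.mk_surjective _ x
  induction y with
  | zero => simp
  | tmul a b => exact h a b
  | add u v hu hv => rw [Submodule.Quotient.mk_add, map_add, map_add, hu, hv]

/-- From a hom on `S²A` to a symmetric bilinear form. -/
noncomputable def homToBil (φ : symPower2 A →+ T) : A →+ A →+ T :=
  AddMonoidHom.mk'
    (fun a => AddMonoidHom.mk' (fun b => φ (Submodule.Quotient.mk (a ⊗ₜ[ℤ] b)))
      (by intro b b'
          show φ _ = φ _ + φ _
          rw [tmul_add, Submodule.Quotient.mk_add, map_add]))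
    (by intro a a'; ext b
        show φ _ = φ _ + φ _
        rw [add_tmul, Submodule.Quotient.mk_add, map_add])

lemma homToBil_mem (φ : symPower2 A →+ T) : homToBil φ ∈ symBil A := by
  intro x y
  show φ _ = φ _
  rw [symPower2_mk_comm]

private noncomputable def bilLift (B : symBil A) : TensorProduct ℤ A A →ₗ[ℤ] T :=
  TensorProduct.lift
    { toFun := fun a => ((B : A →+ A →+ T) a).toIntLinearMap
      map_add' := by intro a a'; ext b; simp
      map_smul' := by intro z a; ext b; simp }

/-- From a symmetric bilinear form to a hom on `S²A`. -/
noncomputable def bilToHom (B : symBil A) : symPower2 A →+ T :=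
  (Submodule.liftQ
    (Submodule.span ℤ {x : TensorProduct ℤ A A | ∃ a b : A, x = a ⊗ₜ[ℤ] b - b ⊗ₜ[ℤ] a})
    (bilLift B)
    (by
      rw [Submodule.span_le]
      rintro x ⟨a, b, rfl⟩
      simp only [SetLike.mem_coe, LinearMap.mem_ker, map_sub, bilLift, TensorProduct.lift.tmul]
      change bilLift B (a ⊗ₜ[ℤ] b - b ⊗ₜ[ℤ] a) = 0
      have ht : ∀ u v : A, bilLift B (u ⊗ₜ[ℤ] v) = (B : A →+ A →+ T) u v :=
        fun u v => TensorProduct.lift.tmul _ _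
      rw [map_sub, ht, ht]
      rw [B.2 a b, sub_self])).toAddMonoidHom

lemma bilToHom_mk (B : symBil A) (a b : A) :
    bilToHom B (Submodule.Quotient.mk (a ⊗ₜ[ℤ] b)) = (B : A →+ A →+ T) a b := by
  change bilLift B (a ⊗ₜ[ℤ] b) = _
  exact TensorProduct.lift.tmul a b

/-- `Hom(S²A, ℝ/ℤ) ≃+ symmetric bilinear forms`. -/
noncomputable def homSymEquivBil : (symPower2 A →+ AddCircle (1 : ℝ)) ≃+ symBil A where
  toFun φ := ⟨homToBil φ, homToBil_mem φ⟩
  invFun B := bilToHom B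
  left_inv φ := by
    apply symPower2_hom_ext
    intro a b
    rw [bilToHom_mk]
    rfl
  right_inv B := by
    apply Subtype.ext
    ext a b
    show homToBil (bilToHom B) a b = (B : A →+ A →+ T) a b
    show bilToHom B (Submodule.Quotient.mk (a ⊗ₜ[ℤ] b)) = _
    exact bilToHom_mk B a b
  map_add' φ ψ := by
    apply Subtype.ext
    ext a b
    rfl

end SymBil

end QuadAux

namespace QuadAux

local notation "T" => AddCircle (1 : ℝ)

section Subsingletons

variable {G H : Type*} [AddCommGroup G] [AddCommGroup H]

/-- The trivial isomorphism between two subsingleton groups. -/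
noncomputable def equivOfSubsingleton [Subsingleton G] [Subsingleton H] : G ≃+ H where
  toFun _ := 0
  invFun _ := 0
  left_inv _ := Subsingleton.elim _ _
  right_inv _ := Subsingleton.elim _ _
  map_add' _ _ := (add_zero (0 : H)).symm

lemma subsingleton_quotient_of (S : AddSubgroup G) (h : ∀ x, x ∈ S) :
    Subsingleton (G ⧸ S) :=
  ⟨fun a b => QuotientAddGroup.induction_on a fun x => QuotientAddGroup.induction_on b fun y =>
    (QuotientAddGroup.eq).mpr (h _)⟩

variable (A : Type*) [AddCommGroup A]

lemma mem_quadGroup_iff {q : A → T} : q ∈ QuadGroup A ↔ IsQuadratic q := Iff.rfl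

lemma mem_quadGroup0_iff {q : A → T} :
    q ∈ quadGroup0 A ↔ IsQuadratic q ∧ ∀ a : A, addOrderOf a • q a = 0 := Iff.rfl

lemma mem_twoSub {x : A} : x ∈ twoSub A ↔ ∃ y, y + y = x := by
  constructor
  · rintro ⟨y, rfl⟩
    exact ⟨y, (two_zsmul y).symm⟩
  · rintro ⟨y, rfl⟩
    exact ⟨y, two_zsmul y⟩

lemma subsingleton_quadGroup [Subsingleton A] : Subsingleton (QuadGroup A) :=
  ⟨fun q q' => Subtype.ext (funext fun a => by
    rw [Subsingleton.elim a 0, quad_zero q.2, quad_zero q'.2])⟩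

lemma subsingleton_quadGroup0 [Subsingleton A] : Subsingleton (quadGroup0 A) :=
  ⟨fun q q' => Subtype.ext (funext fun a => by
    rw [Subsingleton.elim a 0, quad_zero q.2.1, quad_zero q'.2.1])⟩

lemma subsingleton_homSym [Subsingleton A] : Subsingleton (symPower2 A →+ T) :=
  ⟨fun f g => symPower2_hom_ext fun a b => by
    rw [Subsingleton.elim a (0 : A), TensorProduct.zero_tmul, Submodule.Quotient.mk_zero,
      map_zero, map_zero]⟩

end Subsingletons

section Transport

variable {A A' : Type*} [AddCommGroup A] [AddCommGroup A'] (e : A ≃+ A')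

/-- Transport of quadratic forms along an isomorphism. -/
noncomputable def quadCongr : QuadGroup A ≃+ QuadGroup A' where
  toFun q := ⟨q.1 ∘ e.symm.toAddMonoidHom, quad_comp q.2 e.symm.toAddMonoidHom⟩
  invFun q := ⟨q.1 ∘ e.toAddMonoidHom, quad_comp q.2 e.toAddMonoidHom⟩
  left_inv q := Subtype.ext (funext fun a => by simp)
  right_inv q := Subtype.ext (funext fun a => by simp)
  map_add' q q' := rfl

/-- Transport of `Quad₀` along an isomorphism. -/
noncomputable def quad0Congr : quadGroup0 A ≃+ quadGroup0 A' where
  toFun q := ⟨q.1 ∘ e.symm.toAddMonoidHom,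
    quad_comp q.2.1 e.symm.toAddMonoidHom, fun a => by
      have := q.2.2 (e.symm a)
      simpa [addOrderOf_injective e.symm.toAddMonoidHom e.symm.injective a] using this⟩
  invFun q := ⟨q.1 ∘ e.toAddMonoidHom,
    quad_comp q.2.1 e.toAddMonoidHom, fun a => by
      have := q.2.2 (e a)
      simpa [addOrderOf_injective e.toAddMonoidHom e.injective a] using this⟩
  left_inv q := Subtype.ext (funext fun a => by simp)
  right_inv q := Subtype.ext (funext fun a => by simp)
  map_add' q q' := rfl

/-- Compatibility of `Quad₀` membership with composition by an isomorphism. -/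
lemma mem0_comp (q : A' → AddCircle (1 : ℝ)) (hq : IsQuadratic q) :
    (q ∘ ⇑e ∈ quadGroup0 A) ↔ q ∈ quadGroup0 A' := by
  constructor
  · rintro ⟨-, h0⟩
    refine ⟨hq, fun a' => ?_⟩
    have h := h0 (e.symm a')
    simpa [addOrderOf_injective e.symm.toAddMonoidHom e.symm.injective a'] using h
  · rintro ⟨-, h0⟩
    refine ⟨quad_comp hq e.toAddMonoidHom, fun a => ?_⟩
    have h := h0 (e a)
    have key := addOrderOf_injective e.toAddMonoidHom e.injective a
    show addOrderOf a • q (e a) = 0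
    rw [← key]
    exact h

/-- Transport of the quotient `Quad/Quad₀` along an isomorphism. -/
noncomputable def quadQuotCongr :
    (QuadGroup A ⧸ quadGroup0' A) ≃+ (QuadGroup A' ⧸ quadGroup0' A') := by
  refine QuotientAddGroup.congr _ _ (quadCongr e) ?_
  rw [AddSubgroup.map_equiv_eq_comap_symm]
  ext q'
  simp only [AddSubgroup.mem_comap]
  show ((quadCongr e).symm q' : A → AddCircle (1 : ℝ)) ∈ quadGroup0 A ↔
    (q' : A' → AddCircle (1 : ℝ)) ∈ quadGroup0 A'
  exact mem0_comp e (q' : A' → AddCircle (1 : ℝ)) q'.2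

/-- Transport of `A/2A` along an isomorphism. -/
noncomputable def twoQuotCongr : (A ⧸ twoSub A) ≃+ (A' ⧸ twoSub A') := by
  refine QuotientAddGroup.congr _ _ e ?_
  rw [AddSubgroup.map_equiv_eq_comap_symm]
  ext x'
  simp only [AddSubgroup.mem_comap, mem_twoSub]
  constructor
  · rintro ⟨y, hy⟩
    refine ⟨e y, ?_⟩
    rw [← map_add, hy]
    simp
  · rintro ⟨y, hy⟩
    refine ⟨e.symm y, ?_⟩
    rw [← map_add, hy]
    rfl

/-- A bihom composed in both variables with a hom. -/
noncomputable def bicomp (f : A' →+ A) (B : A →+ A →+ AddCircle (1 : ℝ)) :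
    A' →+ A' →+ AddCircle (1 : ℝ) :=
  AddMonoidHom.mk' (fun a' => (B (f a')).comp f)
    (by intro a b; ext c; simp [map_add])

@[simp] lemma bicomp_apply (f : A' →+ A) (B : A →+ A →+ AddCircle (1 : ℝ)) (x y : A') :
    bicomp f B x y = B (f x) (f y) := rfl

/-- Transport of symmetric bilinear forms along an isomorphism. -/
noncomputable def symBilCongr : symBil A ≃+ symBil A' where
  toFun B := ⟨bicomp e.symm.toAddMonoidHom B.1, fun x y => by simp [B.2 (e.symm x) (e.symm y)]⟩
  invFun B := ⟨bicomp e.toAddMonoidHom B.1, fun x y => by simp [B.2 (e x) (e y)]⟩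
  left_inv B := Subtype.ext (by ext x y; simp)
  right_inv B := Subtype.ext (by ext x y; simp)
  map_add' B C := Subtype.ext (by ext x y; simp [bicomp])

end Transport

end QuadAux

namespace QuadAux

local notation "T" => AddCircle (1 : ℝ)

section Prod

variable {M N : Type*} [AddCommGroup M] [AddCommGroup N]

lemma fst_orderOf_dvd (a : M) (b : N) : addOrderOf a ∣ addOrderOf ((a, b) : M × N) :=
  addOrderOf_dvd_of_nsmul_eq_zero (congrArg Prod.fst (addOrderOf_nsmul_eq_zero ((a, b) : M × N)))

lemma snd_orderOf_dvd (a : M) (b : N) : addOrderOf b ∣ addOrderOf ((a, b) : M × N) :=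
  addOrderOf_dvd_of_nsmul_eq_zero (congrArg Prod.snd (addOrderOf_nsmul_eq_zero ((a, b) : M × N)))

lemma addOrderOf_inl (a : M) : addOrderOf ((a, (0 : N)) : M × N) = addOrderOf a := by
  refine Nat.dvd_antisymm ?_ (fst_orderOf_dvd a 0)
  apply addOrderOf_dvd_of_nsmul_eq_zero
  show (addOrderOf a • a, addOrderOf a • (0 : N)) = ((0 : M), (0 : N))
  rw [addOrderOf_nsmul_eq_zero, smul_zero]

lemma addOrderOf_inr (b : N) : addOrderOf (((0 : M), b) : M × N) = addOrderOf b := by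
  refine Nat.dvd_antisymm ?_ (snd_orderOf_dvd 0 b)
  apply addOrderOf_dvd_of_nsmul_eq_zero
  show (addOrderOf b • (0 : M), addOrderOf b • b) = ((0 : M), (0 : N))
  rw [addOrderOf_nsmul_eq_zero, smul_zero]

lemma dvd_smul_zero {x : T} (m n : ℕ) (h : m ∣ n) (hx : m • x = 0) : n • x = 0 := by
  obtain ⟨c, rfl⟩ := h
  rw [mul_nsmul, hx, smul_zero]

/-- The cross-term bihom of a quadratic form on a product. -/
noncomputable def crossHom (q : M × N → T) (h : IsQuadratic q) : M →+ N →+ T :=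
  AddMonoidHom.mk'
    (fun a => AddMonoidHom.mk' (fun b => polz q (a, 0) (0, b))
      (by intro b b'
          show polz q (a, 0) (0, b + b') = polz q (a, 0) (0, b) + polz q (a, 0) (0, b')
          have hh : ((0 : M), b + b') = ((0, b) + (0, b') : M × N) := by simp
          rw [hh, h.2.2]))
    (by intro a a'; ext b
        show polz q (a + a', 0) (0, b) = polz q (a, 0) (0, b) + polz q (a', 0) (0, b)
        have hh : ((a + a' : M), (0 : N)) = ((a, 0) + (a', 0) : M × N) := by simp
        rw [hh, h.2.1])

@[simp] lemma crossHom_apply (q : M × N → T) (h : IsQuadratic q) (a : M) (b : N) :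
    crossHom q h a b = polz q (a, 0) (0, b) := rfl

lemma quad_decomp {q : M × N → T} (h : IsQuadratic q) (a : M) (b : N) :
    q (a, b) = q (a, 0) + q (0, b) + polz q (a, 0) (0, b) := by
  have h2 : ((a, b) : M × N) = (a, 0) + (0, b) := by simp
  rw [h2, polz_def q ((a, 0) : M × N) ((0, b) : M × N)]
  abel

/-- Glue a pair of quadratic forms and a bihom into a quadratic form on the product. -/
noncomputable def glue (q1 : M → T) (q2 : N → T) (β : M →+ N →+ T) : M × N → T :=
  fun p => q1 p.1 + q2 p.2 + β p.1 p.2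

lemma polz_glue (q1 : M → T) (q2 : N → T) (β : M →+ N →+ T) (x y : M × N) :
    polz (glue q1 q2 β) x y =
      polz q1 x.1 y.1 + polz q2 x.2 y.2 + β x.1 y.2 + β y.1 x.2 := by
  simp only [polz, glue, Prod.fst_add, Prod.snd_add, map_add, AddMonoidHom.add_apply]
  abel

lemma glue_quadratic {q1 : M → T} {q2 : N → T} (h1 : IsQuadratic q1) (h2 : IsQuadratic q2)
    (β : M →+ N →+ T) : IsQuadratic (glue q1 q2 β) := by
  refine ⟨fun p => ?_, fun x x' y => ?_, fun x y y' => ?_⟩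
  · show _ = q1 (-p.1) + q2 (-p.2) + β (-p.1) (-p.2)
    rw [← h1.1, ← h2.1]
    have hββ : β (-p.1) (-p.2) = β p.1 p.2 := by simp
    rw [hββ]; rfl
  · simp only [polz_glue, Prod.fst_add, Prod.snd_add, map_add, AddMonoidHom.add_apply,
      h1.2.1, h2.2.1]
    abel
  · simp only [polz_glue, Prod.fst_add, Prod.snd_add, map_add, AddMonoidHom.add_apply,
      h1.2.2, h2.2.2]
    abel

lemma glue_mem0 {q1 : M → T} {q2 : N → T} (h1 : q1 ∈ quadGroup0 M) (h2 : q2 ∈ quadGroup0 N)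
    (β : M →+ N →+ T) : glue q1 q2 β ∈ quadGroup0 (M × N) := by
  refine ⟨glue_quadratic h1.1 h2.1 β, ?_⟩
  rintro ⟨a, b⟩
  show _ • (q1 a + q2 b + β a b) = 0
  rw [smul_add, smul_add]
  rw [dvd_smul_zero _ _ (fst_orderOf_dvd a b) (h1.2 a),
    dvd_smul_zero _ _ (snd_orderOf_dvd a b) (h2.2 b)]
  have hb : addOrderOf ((a, b) : M × N) • β a b = β (addOrderOf ((a, b) : M × N) • a) b := by
    rw [map_nsmul]; rfl
  have ha : addOrderOf ((a, b) : M × N) • a = 0 :=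
    congrArg Prod.fst (addOrderOf_nsmul_eq_zero ((a, b) : M × N))
  rw [hb, ha, map_zero]
  simp

end Prod

end QuadAux

namespace QuadAux

local notation "T" => AddCircle (1 : ℝ)

section ProdEquiv

variable {M N : Type*} [AddCommGroup M] [AddCommGroup N]

lemma comp_inl_mem0 {q : M × N → T} (hq : q ∈ quadGroup0 (M × N)) :
    (fun a : M => q (a, 0)) ∈ quadGroup0 M := by
  refine ⟨quad_comp hq.1 (AddMonoidHom.inl M N), fun a => ?_⟩
  have := hq.2 (a, 0)
  rwa [addOrderOf_inl] at this

lemma comp_inr_mem0 {q : M × N → T} (hq : q ∈ quadGroup0 (M × N)) :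
    (fun b : N => q (0, b)) ∈ quadGroup0 N := by
  refine ⟨quad_comp hq.1 (AddMonoidHom.inr M N), fun b => ?_⟩
  have := hq.2 (0, b)
  rwa [addOrderOf_inr] at this

/-- `Quad₀(M × N) ≃ Quad₀(M) × Quad₀(N) × Bil(M,N)`. -/
noncomputable def quad0Prod :
    quadGroup0 (M × N) ≃+ (quadGroup0 M × quadGroup0 N × (M →+ N →+ T)) where
  toFun q := (⟨fun a => q.1 (a, 0), comp_inl_mem0 q.2⟩,
    ⟨fun b => q.1 (0, b), comp_inr_mem0 q.2⟩, crossHom q.1 q.2.1)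
  invFun t := ⟨glue t.1.1 t.2.1.1 t.2.2, glue_mem0 t.1.2 t.2.1.2 t.2.2⟩
  left_inv q := by
    apply Subtype.ext
    funext p
    obtain ⟨a, b⟩ := p
    exact (quad_decomp q.2.1 a b).symm
  right_inv t := by
    obtain ⟨⟨q1, h1⟩, ⟨q2, h2⟩, β⟩ := t
    refine Prod.ext (Subtype.ext ?_) (Prod.ext (Subtype.ext ?_) ?_)
    · funext a
      show q1 a + q2 0 + β a 0 = q1 a
      rw [quad_zero h2.1, map_zero]
      simp
    · funext b
      show q1 0 + q2 b + β 0 b = q2 b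
      rw [quad_zero h1.1, map_zero]
      simp
    · ext a b
      show polz (glue q1 q2 β) (a, 0) (0, b) = β a b
      rw [polz_glue]
      show polz q1 a 0 + polz q2 0 b + β a b + β 0 0 = β a b
      rw [polz_zero_right h1.1, polz_zero_left h2.1, map_zero]
      simp
  map_add' q q' := by
    refine Prod.ext (Subtype.ext rfl) (Prod.ext (Subtype.ext rfl) ?_)
    ext a b
    show polz (q.1 + q'.1) (a, 0) (0, b) = _
    rw [polz_add_fun]
    rfl

/-- Mixed restriction of a bihom. -/
noncomputable def bimix {X Y : Type*} [AddCommGroup X] [AddCommGroup Y]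
    (B : (M × N) →+ (M × N) →+ T) (f : X →+ M × N) (g : Y →+ M × N) : X →+ Y →+ T :=
  AddMonoidHom.mk' (fun x => (B (f x)).comp g)
    (by intro x y; ext c; simp [map_add])

@[simp] lemma bimix_apply {X Y : Type*} [AddCommGroup X] [AddCommGroup Y]
    (B : (M × N) →+ (M × N) →+ T) (f : X →+ M × N) (g : Y →+ M × N) (x : X) (y : Y) :
    bimix B f g x y = B (f x) (g y) := rfl

/-- Assembling a big bihom on `M × N` from four pieces. -/
noncomputable def bigBil (B1 : M →+ M →+ T) (B2 : N →+ N →+ T) (β : M →+ N →+ T) :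
    (M × N) →+ (M × N) →+ T :=
  AddMonoidHom.mk'
    (fun p => AddMonoidHom.mk' (fun p' => B1 p.1 p'.1 + B2 p.2 p'.2 + β p.1 p'.2 + β p'.1 p.2)
      (by intro u v
          simp only [Prod.fst_add, Prod.snd_add, map_add, AddMonoidHom.add_apply]
          abel))
    (by intro u v
        ext p'
        show B1 (u.1 + v.1) p'.1 + B2 (u.2 + v.2) p'.2 + β (u.1 + v.1) p'.2 + β p'.1 (u.2 + v.2)
          = _
        simp only [map_add, AddMonoidHom.add_apply]
        show _ = B1 u.1 p'.1 + B2 u.2 p'.2 + β u.1 p'.2 + β p'.1 u.2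
          + (B1 v.1 p'.1 + B2 v.2 p'.2 + β v.1 p'.2 + β p'.1 v.2)
        abel)

@[simp] lemma bigBil_apply (B1 : M →+ M →+ T) (B2 : N →+ N →+ T) (β : M →+ N →+ T)
    (p p' : M × N) :
    bigBil B1 B2 β p p' = B1 p.1 p'.1 + B2 p.2 p'.2 + β p.1 p'.2 + β p'.1 p.2 := rfl

/-- `SymBil(M × N) ≃ SymBil(M) × SymBil(N) × Bil(M,N)`. -/
noncomputable def symBilProd :
    symBil (M × N) ≃+ (symBil M × symBil N × (M →+ N →+ T)) where
  toFun B := (⟨bimix B.1 (AddMonoidHom.inl M N) (AddMonoidHom.inl M N),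
      fun x y => by simp [B.2 (x, 0) (y, 0)]⟩,
    ⟨bimix B.1 (AddMonoidHom.inr M N) (AddMonoidHom.inr M N),
      fun x y => by simp [B.2 (0, x) (0, y)]⟩,
    bimix B.1 (AddMonoidHom.inl M N) (AddMonoidHom.inr M N))
  invFun t := ⟨bigBil t.1.1 t.2.1.1 t.2.2,
    fun p p' => by
      simp only [bigBil_apply]
      rw [t.1.2 p.1 p'.1, t.2.1.2 p.2 p'.2]
      abel⟩
  left_inv B := by
    apply Subtype.ext
    ext p p'
    show B.1 (p.1, 0) (p'.1, 0) + B.1 (0, p.2) (0, p'.2) + B.1 (p.1, 0) (0, p'.2)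
      + B.1 (p'.1, 0) (0, p.2) = B.1 p p'
    have hp : (p : M × N) = (p.1, 0) + (0, p.2) := by simp
    have hp' : (p' : M × N) = (p'.1, 0) + (0, p'.2) := by simp
    rw [show B.1 p p' = B.1 ((p.1, 0) + (0, p.2)) ((p'.1, 0) + (0, p'.2)) by rw [← hp, ← hp']]
    rw [B.2 ((p'.1, 0) : M × N) ((0, p.2) : M × N)] -- adjust later maybe
    simp only [map_add, AddMonoidHom.add_apply]
    rw [B.2 ((0, p.2) : M × N) ((p'.1, 0) : M × N)]
    abel
  right_inv t := by
    obtain ⟨⟨B1, h1⟩, ⟨B2, h2⟩, β⟩ := t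
    refine Prod.ext (Subtype.ext ?_) (Prod.ext (Subtype.ext ?_) ?_)
    · ext x y
      show bigBil B1 B2 β (x, 0) (y, 0) = B1 x y
      simp
    · ext x y
      show bigBil B1 B2 β (0, x) (0, y) = B2 x y
      simp
    · ext x y
      show bigBil B1 B2 β (x, 0) (0, y) = β x y
      simp
  map_add' B C := by
    refine Prod.ext (Subtype.ext ?_) (Prod.ext (Subtype.ext ?_) ?_) <;> (ext x y; rfl)

end ProdEquiv

end QuadAux

namespace QuadAux

local notation "T" => AddCircle (1 : ℝ)

section ProdQuot

variable {M N : Type*} [AddCommGroup M] [AddCommGroup N]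

/-- The projection of `M × N` onto `M/2M × N/2N`. -/
noncomputable def twoProj : (M × N) →+ (M ⧸ twoSub M) × (N ⧸ twoSub N) :=
  ((QuotientAddGroup.mk' (twoSub M)).comp (AddMonoidHom.fst M N)).prod
    ((QuotientAddGroup.mk' (twoSub N)).comp (AddMonoidHom.snd M N))

lemma twoProj_surjective : Function.Surjective (twoProj (M := M) (N := N)) := by
  rintro ⟨x, y⟩
  obtain ⟨a, rfl⟩ := QuotientAddGroup.mk'_surjective (twoSub M) x
  obtain ⟨b, rfl⟩ := QuotientAddGroup.mk'_surjective (twoSub N) y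
  exact ⟨(a, b), rfl⟩

lemma twoProj_ker : (twoProj (M := M) (N := N)).ker = twoSub (M × N) := by
  ext p
  obtain ⟨a, b⟩ := p
  simp only [AddMonoidHom.mem_ker, twoProj, AddMonoidHom.prod_apply, Prod.mk_eq_zero,
    AddMonoidHom.coe_comp, Function.comp_apply, QuotientAddGroup.mk'_apply,
    QuotientAddGroup.eq_zero_iff]
  rw [mem_twoSub, mem_twoSub, mem_twoSub]
  constructor
  · rintro ⟨⟨x, hx⟩, ⟨y, hy⟩⟩
    exact ⟨(x, y), by rw [Prod.mk_add_mk, hx, hy]; rfl⟩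
  · rintro ⟨⟨x, y⟩, h⟩
    rw [Prod.mk_add_mk, Prod.mk.injEq] at h
    exact ⟨⟨x, h.1⟩, ⟨y, h.2⟩⟩

/-- `(M × N)/2(M × N) ≃ M/2M × N/2N`. -/
noncomputable def twoQuotProd :
    ((M × N) ⧸ twoSub (M × N)) ≃+ ((M ⧸ twoSub M) × (N ⧸ twoSub N)) :=
  (QuotientAddGroup.quotientAddEquivOfEq twoProj_ker.symm).trans
    (QuotientAddGroup.quotientKerEquivOfSurjective _ twoProj_surjective)

/-- Restriction homomorphism of quadratic groups to the first factor. -/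
noncomputable def resL : QuadGroup (M × N) →+ QuadGroup M :=
  AddMonoidHom.mk' (fun q => ⟨fun a => q.1 (a, 0), quad_comp q.2 (AddMonoidHom.inl M N)⟩)
    (fun q q' => rfl)

/-- Restriction homomorphism of quadratic groups to the second factor. -/
noncomputable def resR : QuadGroup (M × N) →+ QuadGroup N :=
  AddMonoidHom.mk' (fun q => ⟨fun b => q.1 (0, b), quad_comp q.2 (AddMonoidHom.inr M N)⟩)
    (fun q q' => rfl)

/-- The projection of `Quad(M × N)` onto `Quad(M)/Quad₀(M) × Quad(N)/Quad₀(N)`. -/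
noncomputable def quadProj :
    QuadGroup (M × N) →+ (QuadGroup M ⧸ quadGroup0' M) × (QuadGroup N ⧸ quadGroup0' N) :=
  ((QuotientAddGroup.mk' (quadGroup0' M)).comp resL).prod
    ((QuotientAddGroup.mk' (quadGroup0' N)).comp resR)

lemma quadProj_surjective : Function.Surjective (quadProj (M := M) (N := N)) := by
  rintro ⟨x, y⟩
  obtain ⟨q1, rfl⟩ := QuotientAddGroup.mk'_surjective (quadGroup0' M) x
  obtain ⟨q2, rfl⟩ := QuotientAddGroup.mk'_surjective (quadGroup0' N) y
  refine ⟨⟨glue q1.1 q2.1 0, glue_quadratic q1.2 q2.2 0⟩, ?_⟩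
  have h1 : resL ⟨glue q1.1 q2.1 0, glue_quadratic q1.2 q2.2 0⟩ = q1 := by
    apply Subtype.ext
    funext a
    show q1.1 a + q2.1 0 + (0 : M →+ N →+ T) a 0 = q1.1 a
    rw [quad_zero q2.2]
    simp
  have h2 : resR ⟨glue q1.1 q2.1 0, glue_quadratic q1.2 q2.2 0⟩ = q2 := by
    apply Subtype.ext
    funext b
    show q1.1 0 + q2.1 b + (0 : M →+ N →+ T) 0 b = q2.1 b
    rw [quad_zero q1.2]
    simp
  show ((QuotientAddGroup.mk' (quadGroup0' M)) (resL _), (QuotientAddGroup.mk' (quadGroup0' N)) (resR _)) = _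
  rw [h1, h2]

lemma quadProj_ker : (quadProj (M := M) (N := N)).ker = quadGroup0' (M × N) := by
  ext q
  simp only [AddMonoidHom.mem_ker, quadProj, AddMonoidHom.prod_apply, Prod.mk_eq_zero,
    AddMonoidHom.coe_comp, Function.comp_apply, QuotientAddGroup.mk'_apply,
    QuotientAddGroup.eq_zero_iff]
  constructor
  · rintro ⟨hL, hR⟩
    have hL' : (fun a : M => q.1 (a, 0)) ∈ quadGroup0 M := hL
    have hR' : (fun b : N => q.1 (0, b)) ∈ quadGroup0 N := hR
    show q.1 ∈ quadGroup0 (M × N)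
    refine ⟨q.2, ?_⟩
    rintro ⟨a, b⟩
    rw [quad_decomp q.2 a b, smul_add, smul_add]
    have h1 : addOrderOf ((a, b) : M × N) • q.1 (a, 0) = 0 :=
      dvd_smul_zero _ _ (fst_orderOf_dvd a b) (hL'.2 a)
    have h2 : addOrderOf ((a, b) : M × N) • q.1 (0, b) = 0 :=
      dvd_smul_zero _ _ (snd_orderOf_dvd a b) (hR'.2 b)
    have ha : addOrderOf ((a, b) : M × N) • ((a, (0 : N)) : M × N) = 0 := by
      have h0 : addOrderOf ((a, b) : M × N) • a = 0 :=
        congrArg Prod.fst (addOrderOf_nsmul_eq_zero ((a, b) : M × N))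
      show (addOrderOf ((a, b) : M × N) • a, addOrderOf ((a, b) : M × N) • (0 : N))
        = ((0 : M), (0 : N))
      rw [h0, smul_zero]
    have h3 : addOrderOf ((a, b) : M × N) • polz q.1 (a, 0) (0, b) = 0 := by
      rw [← polz_nsmul_left q.2, ha, polz_zero_left q.2]
    rw [h1, h2, h3]
    simp
  · intro hq
    have hq' : q.1 ∈ quadGroup0 (M × N) := hq
    constructor
    · exact comp_inl_mem0 hq'
    · exact comp_inr_mem0 hq'

/-- `Quad(M×N)/Quad₀(M×N) ≃ Quad(M)/Quad₀(M) × Quad(N)/Quad₀(N)`. -/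
noncomputable def quadQuotProd :
    (QuadGroup (M × N) ⧸ quadGroup0' (M × N)) ≃+
      ((QuadGroup M ⧸ quadGroup0' M) × (QuadGroup N ⧸ quadGroup0' N)) :=
  (QuotientAddGroup.quotientAddEquivOfEq quadProj_ker.symm).trans
    (QuotientAddGroup.quotientKerEquivOfSurjective _ quadProj_surjective)

end ProdQuot

end QuadAux

namespace QuadAux

section Cyclic

variable {n : ℕ} [NeZero n]

omit [NeZero n] in
lemma sub_cast_dvd {j k : ℤ} (h : (j : ZMod n) = (k : ZMod n)) : ∃ t : ℤ, j = k + n * t := by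
  have hd : (n : ℤ) ∣ j - k := by
    rwa [← ZMod.intCast_zmod_eq_zero_iff_dvd, Int.cast_sub, sub_eq_zero]
  obtain ⟨t, ht⟩ := hd
  exact ⟨t, by linarith⟩

omit [NeZero n] in
lemma zsmul_zero_of_dvd {α : AddCircle (1 : ℝ)} (hα : (n : ℤ) • α = 0) {j : ℤ}
    (h : (n : ℤ) ∣ j) : j • α = 0 := by
  obtain ⟨t, rfl⟩ := h
  rw [mul_comm, mul_zsmul, hα, smul_zero]

omit [NeZero n] in
lemma lin_congr {β : AddCircle (1 : ℝ)} (hβ : (n : ℤ) • β = 0) {j k : ℤ}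
    (h : (j : ZMod n) = (k : ZMod n)) (m : ℤ) : (j * m) • β = (k * m) • β := by
  obtain ⟨t, rfl⟩ := sub_cast_dvd h
  have he : (k + n * t) * m = k * m + (t * m) * n := by ring
  have h3 : ((t * m) * (n : ℤ)) • β = 0 := by rw [mul_zsmul, hβ, smul_zero]
  rw [he, add_zsmul, h3, add_zero]

omit [NeZero n] in
lemma cross_congr {α : AddCircle (1 : ℝ)} (h2 : (2 * (n : ℤ)) • α = 0) {j k : ℤ}
    (h : (j : ZMod n) = (k : ZMod n)) (m : ℤ) : (2 * j * m) • α = (2 * k * m) • α := by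
  obtain ⟨t, rfl⟩ := sub_cast_dvd h
  have he : 2 * (k + n * t) * m = 2 * k * m + (t * m) * (2 * n) := by ring
  have h3 : ((t * m) * (2 * (n : ℤ))) • α = 0 := by rw [mul_zsmul, h2, smul_zero]
  rw [he, add_zsmul, h3, add_zero]

omit [NeZero n] in
lemma sq_congr {α : AddCircle (1 : ℝ)} (h2 : (2 * (n : ℤ)) • α = 0)
    (hsq : ((n : ℤ) * (n : ℤ)) • α = 0) {j k : ℤ}
    (h : (j : ZMod n) = (k : ZMod n)) : (j * j) • α = (k * k) • α := by
  obtain ⟨t, rfl⟩ := sub_cast_dvd h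
  have he : (k + n * t) * (k + n * t)
      = k * k + ((k * t) * (2 * n) + (t * t) * ((n : ℤ) * n)) := by ring
  have h3 : ((k * t) * (2 * (n : ℤ))) • α = 0 := by rw [mul_zsmul, h2, smul_zero]
  have h4 : ((t * t) * ((n : ℤ) * n)) • α = 0 := by rw [mul_zsmul, hsq, smul_zero]
  rw [he, add_zsmul, add_zsmul, h3, h4, add_zero, add_zero]

lemma intCast_val_cast (c : ZMod n) : (((c.val : ℤ)) : ZMod n) = c := by
  rw [Int.cast_natCast]
  exact ZMod.natCast_rightInverse c

lemma natCast_val_cast (c : ZMod n) : (((c.val : ℕ)) : ZMod n) = c :=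
  ZMod.natCast_rightInverse c

lemma val_add_cast (a b : ZMod n) :
    ((((a + b).val : ℤ)) : ZMod n) = (((a.val : ℤ) + (b.val : ℤ) : ℤ) : ZMod n) := by
  push_cast [natCast_val_cast]
  rfl

lemma val_neg_cast (a : ZMod n) :
    ((((-a).val : ℤ)) : ZMod n) = ((-(a.val : ℤ) : ℤ) : ZMod n) := by
  push_cast [natCast_val_cast]
  rfl

/-- The quadratic form on `ZMod n` with `q 1 = α`. -/
noncomputable def qmap (α : AddCircle (1 : ℝ)) : ZMod n → AddCircle (1 : ℝ) :=
  fun c => ((c.val : ℤ) * (c.val : ℤ)) • α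

lemma qmap_add (α : AddCircle (1 : ℝ)) (h2 : (2 * (n : ℤ)) • α = 0)
    (hsq : ((n : ℤ) * (n : ℤ)) • α = 0) (a b : ZMod n) :
    qmap α (a + b) = (((a.val : ℤ) + b.val) * ((a.val : ℤ) + b.val)) • α :=
  sq_congr h2 hsq (val_add_cast a b)

lemma polz_qmap (α : AddCircle (1 : ℝ)) (h2 : (2 * (n : ℤ)) • α = 0)
    (hsq : ((n : ℤ) * (n : ℤ)) • α = 0) (a b : ZMod n) :
    polz (qmap α) a b = (2 * (a.val : ℤ) * (b.val : ℤ)) • α := by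
  rw [polz, qmap_add α h2 hsq, qmap, qmap]
  rw [sub_eq_add_neg, sub_eq_add_neg, ← neg_zsmul, ← neg_zsmul, ← add_zsmul, ← add_zsmul]
  have he : ((a.val : ℤ) + b.val) * ((a.val : ℤ) + b.val) + -((a.val : ℤ) * a.val)
      + -((b.val : ℤ) * b.val) = 2 * (a.val : ℤ) * (b.val : ℤ) := by ring
  rw [he]

lemma qmap_quadratic (α : AddCircle (1 : ℝ)) (h2 : (2 * (n : ℤ)) • α = 0)
    (hsq : ((n : ℤ) * (n : ℤ)) • α = 0) : IsQuadratic (qmap (n := n) α) := by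
  refine ⟨fun a => ?_, fun x x' y => ?_, fun x y y' => ?_⟩
  · show qmap α a = (((-a).val : ℤ) * ((-a).val : ℤ)) • α
    rw [show qmap α a = ((a.val : ℤ) * (a.val : ℤ)) • α from rfl,
      sq_congr h2 hsq (val_neg_cast a), neg_mul_neg]
  · rw [polz_qmap α h2 hsq, polz_qmap α h2 hsq, polz_qmap α h2 hsq,
      cross_congr h2 (val_add_cast x x')]
    have he : 2 * ((x.val : ℤ) + (x'.val : ℤ)) * (y.val : ℤ)
        = 2 * (x.val : ℤ) * (y.val : ℤ) + 2 * (x'.val : ℤ) * (y.val : ℤ) := by ring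
    rw [he, add_zsmul]
  · rw [polz_qmap α h2 hsq, polz_qmap α h2 hsq, polz_qmap α h2 hsq]
    have hc : ∀ m j : ℤ, 2 * m * j = 2 * j * m := by intro m j; ring
    rw [hc, cross_congr h2 (val_add_cast y y')]
    have he : 2 * ((y.val : ℤ) + (y'.val : ℤ)) * (x.val : ℤ)
        = 2 * (x.val : ℤ) * (y.val : ℤ) + 2 * (x.val : ℤ) * (y'.val : ℤ) := by ring
    rw [he, add_zsmul]

lemma quad_eq_qmap {q : ZMod n → AddCircle (1 : ℝ)} (h : IsQuadratic q) (c : ZMod n) :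
    q c = qmap (q 1) c := by
  have h1 : c = c.val • (1 : ZMod n) := by
    rw [nsmul_eq_mul, mul_one]
    exact (natCast_val_cast c).symm
  rw [show qmap (q 1) c = ((c.val : ℤ) * (c.val : ℤ)) • q 1 from rfl]
  nth_rewrite 1 [h1]
  rw [quad_nsmul h, ← natCast_zsmul]
  norm_cast

lemma qmap_mem0 (α : AddCircle (1 : ℝ)) (hα : (n : ℤ) • α = 0) :
    qmap (n := n) α ∈ quadGroup0 (ZMod n) := by
  have h2 : (2 * (n : ℤ)) • α = 0 := by rw [mul_zsmul, hα, smul_zero]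
  have hsq : ((n : ℤ) * (n : ℤ)) • α = 0 := by rw [mul_zsmul, hα, smul_zero]
  refine ⟨qmap_quadratic α h2 hsq, fun c => ?_⟩
  show addOrderOf c • (((c.val : ℤ) * (c.val : ℤ)) • α) = 0
  rw [← natCast_zsmul, ← mul_zsmul]
  have hdvd : (n : ℤ) ∣ (addOrderOf c : ℤ) * (c.val : ℤ) := by
    rw [← ZMod.intCast_zmod_eq_zero_iff_dvd]
    push_cast [natCast_val_cast]
    have h0 := addOrderOf_nsmul_eq_zero c
    rwa [nsmul_eq_mul] at h0
  have he : (addOrderOf c : ℤ) * ((c.val : ℤ) * (c.val : ℤ))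
      = ((addOrderOf c : ℤ) * (c.val : ℤ)) * (c.val : ℤ) := by ring
  rw [he]
  exact zsmul_zero_of_dvd hα (Dvd.dvd.mul_right hdvd _)

/-- The `n`-torsion subgroup of the circle. -/
noncomputable def torsion (n : ℕ) : AddSubgroup (AddCircle (1 : ℝ)) where
  carrier := {α | (n : ℤ) • α = 0}
  zero_mem' := smul_zero _
  add_mem' := by intro a b ha hb; simp only [Set.mem_setOf_eq] at *; rw [smul_add, ha, hb, add_zero]
  neg_mem' := by intro a ha; simp only [Set.mem_setOf_eq] at *; rw [smul_neg, ha, neg_zero]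

lemma mem_torsion (m : ℕ) (α : AddCircle (1 : ℝ)) : α ∈ torsion m ↔ (m : ℤ) • α = 0 := Iff.rfl

lemma val_one_int (hn : 1 < n) : ((1 : ZMod n).val : ℤ) = 1 := by
  rw [ZMod.val_one_eq_one_mod, Nat.mod_eq_of_lt hn]
  rfl

/-- `Quad₀(ZMod n) ≃ T[n]`. -/
noncomputable def quad0Cyclic (hn : 1 < n) : quadGroup0 (ZMod n) ≃+ torsion n where
  toFun q := ⟨q.1 1, by
    have h0 := q.2.2 1
    rw [ZMod.addOrderOf_one] at h0
    rw [mem_torsion, ← natCast_zsmul] at *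
    exact h0⟩
  invFun α := ⟨qmap α.1, qmap_mem0 α.1 α.2⟩
  left_inv q := Subtype.ext (funext fun c => (quad_eq_qmap q.2.1 c).symm)
  right_inv α := by
    apply Subtype.ext
    show qmap α.1 1 = α.1
    rw [show qmap (n := n) α.1 1 = (((1 : ZMod n).val : ℤ) * ((1 : ZMod n).val : ℤ)) • α.1
      from rfl, val_one_int hn]
    simp
  map_add' q q' := Subtype.ext rfl

/-- `SymBil(ZMod n) ≃ T[n]`. -/
noncomputable def symBilCyclic (hn : 1 < n) : symBil (ZMod n) ≃+ torsion n where
  toFun B := ⟨B.1 1 1, by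
    rw [mem_torsion]
    have h0 : ((n : ℤ) • (1 : ZMod n)) = 0 := by
      rw [zsmul_eq_mul, mul_one]
      exact_mod_cast ZMod.natCast_self n
    rw [← map_zsmul (B.1 1) (n : ℤ) (1 : ZMod n), h0, map_zero]⟩
  invFun β := ⟨AddMonoidHom.mk'
      (fun a => AddMonoidHom.mk' (fun b => ((a.val : ℤ) * (b.val : ℤ)) • β.1)
        (by intro b b'
            have hc : ∀ j m : ℤ, j * m = m * j := fun j m => mul_comm j m
            show ((a.val : ℤ) * (((b + b').val : ℤ))) • β.1 = _
            rw [hc, lin_congr β.2 (val_add_cast b b'), hc]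
            have he : (a.val : ℤ) * ((b.val : ℤ) + (b'.val : ℤ))
              = (a.val : ℤ) * (b.val : ℤ) + (a.val : ℤ) * (b'.val : ℤ) := by ring
            rw [he, add_zsmul]))
      (by intro a a'
          ext b
          show ((((a + a').val : ℤ)) * (b.val : ℤ)) • β.1 = _
          rw [lin_congr β.2 (val_add_cast a a')]
          have he : ((a.val : ℤ) + (a'.val : ℤ)) * (b.val : ℤ)
            = (a.val : ℤ) * (b.val : ℤ) + (a'.val : ℤ) * (b.val : ℤ) := by ring
          rw [he, add_zsmul]
          rfl),
    fun x y => by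
      show ((x.val : ℤ) * (y.val : ℤ)) • β.1 = ((y.val : ℤ) * (x.val : ℤ)) • β.1
      rw [mul_comm]⟩
  left_inv B := by
    apply Subtype.ext
    ext a b
    show ((a.val : ℤ) * (b.val : ℤ)) • B.1 1 1 = B.1 a b
    have h1 : a = a.val • (1 : ZMod n) := by
      rw [nsmul_eq_mul, mul_one]; exact (natCast_val_cast a).symm
    have h2 : b = b.val • (1 : ZMod n) := by
      rw [nsmul_eq_mul, mul_one]; exact (natCast_val_cast b).symm
    nth_rewrite 2 [h1, h2]
    rw [map_nsmul B.1 a.val (1 : ZMod n), AddMonoidHom.nsmul_apply,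
      map_nsmul (B.1 1) b.val (1 : ZMod n), ← natCast_zsmul, ← natCast_zsmul, ← mul_zsmul]
  right_inv β := by
    apply Subtype.ext
    show (((1 : ZMod n).val : ℤ) * ((1 : ZMod n).val : ℤ)) • β.1 = β.1
    rw [val_one_int hn]
    simp
  map_add' B C := Subtype.ext rfl

end Cyclic

end QuadAux

namespace QuadAux

section Cyclic2

variable {n : ℕ} [NeZero n]

lemma zmod_nsmul_self (x : ZMod n) : n • x = 0 := by
  rw [nsmul_eq_mul]
  rw [ZMod.natCast_self, zero_mul]

lemma twoSub_all_of_odd (hodd : Odd n) (x : ZMod n) : x ∈ twoSub (ZMod n) := by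
  obtain ⟨k, hk⟩ := hodd
  rw [mem_twoSub]
  refine ⟨(k + 1) • x, ?_⟩
  rw [← add_nsmul]
  have he : (k + 1) + (k + 1) = n + 1 := by omega
  rw [he, add_nsmul, zmod_nsmul_self, one_nsmul, zero_add]

lemma quad0_all_of_odd (hodd : Odd n) (q : QuadGroup (ZMod n)) :
    q ∈ quadGroup0' (ZMod n) := by
  refine ⟨q.2, fun a => ?_⟩
  set o := addOrderOf a with ho
  have hdvd : o ∣ n := addOrderOf_dvd_of_nsmul_eq_zero (zmod_nsmul_self a)
  have hoodd : Odd o := by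
    rcases Nat.even_or_odd o with he | ho'
    · exfalso
      obtain ⟨t, ht⟩ := he
      have h2 : 2 ∣ n := dvd_trans ⟨t, by omega⟩ hdvd
      rw [← Nat.not_even_iff_odd] at hodd
      exact hodd ((even_iff_two_dvd).mpr h2)
    · exact ho'
  obtain ⟨m, hm⟩ := hoodd
  have h2o : (2 * o) • q.1 a = 0 := by
    have h := quad_two_orderOf_smul q.2 a
    rw [← two_nsmul] at h
    rw [mul_nsmul]
    exact h
  have hoo : (o * o) • q.1 a = 0 := by
    rw [← quad_nsmul q.2, addOrderOf_nsmul_eq_zero, quad_zero q.2]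
  have he : o * o = (2 * o) * m + o := by rw [hm]; ring
  rw [he, add_nsmul, mul_nsmul, h2o, smul_zero, zero_add] at hoo
  exact hoo

/-- `ZMod n / 2 ZMod n ≃ ZMod 2` for even `n`. -/
noncomputable def zmodTwoQuot (heven : 2 ∣ n) : (ZMod n ⧸ twoSub (ZMod n)) ≃+ ZMod 2 := by
  have hker : (ZMod.castHom heven (ZMod 2)).toAddMonoidHom.ker = twoSub (ZMod n) := by
    ext x
    rw [AddMonoidHom.mem_ker, mem_twoSub]
    have hx : (ZMod.castHom heven (ZMod 2)).toAddMonoidHom x = (x.val : ZMod 2) := by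
      show ZMod.castHom heven (ZMod 2) x = _
      rw [ZMod.castHom_apply, ← ZMod.natCast_val]
    rw [hx, ZMod.natCast_eq_zero_iff]
    constructor
    · rintro ⟨t, ht⟩
      refine ⟨((x.val / 2 : ℕ) : ZMod n), ?_⟩
      rw [← Nat.cast_add]
      have he : x.val / 2 + x.val / 2 = x.val := by omega
      rw [he]
      exact natCast_val_cast x
    · rintro ⟨y, rfl⟩
      have hy : (y + y).val = 2 * y.val ∨ (y + y).val + n = 2 * y.val := by
        have hv := ZMod.val_add y y
        rcases Nat.lt_or_ge (y.val + y.val) n with hlt | hge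
        · left; rw [hv, Nat.mod_eq_of_lt hlt]; ring
        · right
          have hlt2 : y.val + y.val - n < n := by
            have := ZMod.val_lt y
            omega
          rw [hv]
          have : (y.val + y.val) % n = y.val + y.val - n := by
            rw [Nat.mod_eq_sub_mod (by omega), Nat.mod_eq_of_lt hlt2]
          omega
      rcases hy with h | h
      · exact ⟨y.val, by omega⟩
      · obtain ⟨c, hc⟩ := heven
        exact ⟨y.val - c, by omega⟩
  have hsurj : Function.Surjective (ZMod.castHom heven (ZMod 2)).toAddMonoidHom := by
    intro y
    refine ⟨((y.val : ℕ) : ZMod n), ?_⟩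
    show ZMod.castHom heven (ZMod 2) _ = y
    rw [map_natCast]
    exact natCast_val_cast y
  exact (QuotientAddGroup.quotientAddEquivOfEq hker.symm).trans
    (QuotientAddGroup.quotientKerEquivOfSurjective _ hsurj)

end Cyclic2

end QuadAux

namespace QuadAux

section Cyclic3

variable {n : ℕ} [NeZero n]

/-- The invariant `n • q 1` of a quadratic form on `ZMod n`. -/
noncomputable def finv (q : QuadGroup (ZMod n)) : AddCircle (1 : ℝ) := (n : ℤ) • q.1 1

lemma finv_add (q q' : QuadGroup (ZMod n)) : finv (q + q') = finv q + finv q' := by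
  show (n : ℤ) • ((q.1 + q'.1) 1) = _
  rw [Pi.add_apply, smul_add]
  rfl

lemma finv_two_torsion (q : QuadGroup (ZMod n)) : finv q + finv q = 0 := by
  have h := quad_two_orderOf_smul q.2 (1 : ZMod n)
  rw [ZMod.addOrderOf_one, smul_add] at h
  show (n : ℤ) • q.1 1 + (n : ℤ) • q.1 1 = 0
  rw [natCast_zsmul]
  exact h

lemma finv_zero_iff (q : QuadGroup (ZMod n)) : finv q = 0 ↔ q ∈ quadGroup0' (ZMod n) := by
  constructor
  · intro hf
    show q.1 ∈ quadGroup0 (ZMod n)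
    have hfun : q.1 = qmap (q.1 1) := funext fun c => quad_eq_qmap q.2 c
    rw [hfun]
    exact qmap_mem0 _ hf
  · intro hq
    have hq' : q.1 ∈ quadGroup0 (ZMod n) := hq
    have h0 := hq'.2 (1 : ZMod n)
    rw [ZMod.addOrderOf_one] at h0
    show (n : ℤ) • q.1 1 = 0
    rw [natCast_zsmul]
    exact h0

/-- The Arf-type invariant as a map to `ZMod 2`. -/
noncomputable def chi : QuadGroup (ZMod n) →+ ZMod 2 :=
  AddMonoidHom.mk' (fun q => if finv q = 0 then 0 else 1)
    (by
      intro q q'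
      show (if finv (q + q') = 0 then (0 : ZMod 2) else 1)
          = (if finv q = 0 then (0 : ZMod 2) else 1) + (if finv q' = 0 then (0 : ZMod 2) else 1)
      rw [finv_add]
      rcases two_torsion_cases (finv q) (finv_two_torsion q) with h1 | h1 <;>
        rcases two_torsion_cases (finv q') (finv_two_torsion q') with h2 | h2 <;>
          rw [h1, h2]
      · simp
      · simp
      · simp
      · rw [half_add_half, if_pos rfl, if_neg half_ne_zero]
        decide)

lemma chi_ker : (chi (n := n)).ker = quadGroup0' (ZMod n) := by
  ext q
  rw [AddMonoidHom.mem_ker, ← finv_zero_iff]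
  show (if finv q = 0 then (0 : ZMod 2) else 1) = 0 ↔ finv q = 0
  rcases eq_or_ne (finv q) 0 with h | h
  · rw [if_pos h]
    simp [h]
  · rw [if_neg h]
    simp only [h, iff_false]
    decide

lemma chi_surjective (heven : 2 ∣ n) : Function.Surjective (chi (n := n)) := by
  have hn1 : 1 < n := by
    rcases heven with ⟨c, rfl⟩
    have := NeZero.ne (2 * c)
    omega
  obtain ⟨c, hc⟩ := heven
  have hc0 : c ≠ 0 := by rintro rfl; simp at hc; exact absurd hc (NeZero.ne n)
  set α : AddCircle (1 : ℝ) := ((1 / (2 * n) : ℝ) : AddCircle (1 : ℝ)) with hα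
  have hn0 : (n : ℝ) ≠ 0 := Nat.cast_ne_zero.mpr (NeZero.ne n)
  have hcoe : ∀ z : ℤ, ∀ x : ℝ, z • (x : AddCircle (1 : ℝ)) = ((z * x : ℝ) : AddCircle (1 : ℝ)) := by
    intro z x
    rw [← AddCircle.coe_zsmul]
    norm_num
  have h2 : (2 * (n : ℤ)) • α = 0 := by
    rw [hα, hcoe]
    have he : ((2 * (n : ℤ) : ℤ) : ℝ) * (1 / (2 * n) : ℝ) = 1 := by
      push_cast
      field_simp
    rw [he]
    exact AddCircle.coe_period 1
  have hsq : ((n : ℤ) * (n : ℤ)) • α = 0 := by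
    rw [hα, hcoe]
    have he : (((n : ℤ) * (n : ℤ) : ℤ) : ℝ) * (1 / (2 * n) : ℝ) = ((c : ℤ) : ℝ) := by
      push_cast
      rw [hc]
      push_cast
      field_simp
    rw [he, AddCircle.coe_eq_zero_iff]
    exact ⟨c, by rw [zsmul_eq_mul, mul_one]⟩
  have hval : (n : ℤ) • α = half := by
    rw [hα, hcoe]
    have he : ((n : ℤ) : ℝ) * (1 / (2 * n) : ℝ) = (1 / 2 : ℝ) := by
      field_simp
      norm_cast
    rw [he]
  intro y
  rcases eq_or_ne y 0 with rfl | hy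
  · exact ⟨0, map_zero _⟩
  · have hy1 : y = 1 := by
      have : y.val < 2 := ZMod.val_lt y
      have h0 : y.val ≠ 0 := fun h => hy (by rw [← natCast_val_cast y, h]; rfl)
      have : y.val = 1 := by omega
      rw [← natCast_val_cast y, this]
      rfl
    subst hy1
    refine ⟨⟨qmap α, qmap_quadratic α h2 hsq⟩, ?_⟩
    show (if finv ⟨qmap α, qmap_quadratic α h2 hsq⟩ = 0 then (0 : ZMod 2) else 1) = 1
    have hf : finv (⟨qmap α, qmap_quadratic α h2 hsq⟩ : QuadGroup (ZMod n)) = half := by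
      show (n : ℤ) • qmap α 1 = half
      rw [show qmap (n := n) α 1 = (((1 : ZMod n).val : ℤ) * ((1 : ZMod n).val : ℤ)) • α
        from rfl, val_one_int hn1]
      rw [one_mul, one_zsmul]
      exact hval
    rw [hf, if_neg half_ne_zero]

/-- `Quad(ZMod n)/Quad₀(ZMod n) ≃ ZMod 2` for even `n`. -/
noncomputable def quadQuotCyclicEven (heven : 2 ∣ n) :
    (QuadGroup (ZMod n) ⧸ quadGroup0' (ZMod n)) ≃+ ZMod 2 :=
  (QuotientAddGroup.quotientAddEquivOfEq chi_ker.symm).trans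
    (QuotientAddGroup.quotientKerEquivOfSurjective _ (chi_surjective heven))

end Cyclic3

end QuadAux

namespace QuadAux

section Assembly

lemma subsingleton_symBil (A : Type*) [AddCommGroup A] [Subsingleton A] :
    Subsingleton (symBil A) :=
  ⟨fun B C => Subtype.ext (by
    ext a b
    rw [Subsingleton.elim a (0 : A)]
    simp)⟩

/-- Both statements for a trivial group. -/
lemma P_subsingleton (A : Type*) [AddCommGroup A] [Subsingleton A] :
    Nonempty (quadGroup0 A ≃+ symBil A) ∧
      Nonempty ((QuadGroup A ⧸ quadGroup0' A) ≃+ (A ⧸ twoSub A)) := by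
  haveI := subsingleton_quadGroup0 A
  haveI := subsingleton_symBil A
  haveI h1 : Subsingleton (QuadGroup A ⧸ quadGroup0' A) := by
    haveI := subsingleton_quadGroup A
    exact subsingleton_quotient_of _ (fun q => by rw [Subsingleton.elim q 0]; exact zero_mem _)
  haveI h2 : Subsingleton (A ⧸ twoSub A) :=
    subsingleton_quotient_of _ (fun x => by rw [Subsingleton.elim x 0]; exact zero_mem _)
  exact ⟨⟨equivOfSubsingleton⟩, ⟨equivOfSubsingleton⟩⟩

/-- Both statements for cyclic groups. -/
lemma P_cyclic (n : ℕ) [NeZero n] :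
    Nonempty (quadGroup0 (ZMod n) ≃+ symBil (ZMod n)) ∧
      Nonempty ((QuadGroup (ZMod n) ⧸ quadGroup0' (ZMod n)) ≃+ (ZMod n ⧸ twoSub (ZMod n))) := by
  rcases lt_or_ge 1 n with hn | hn
  · constructor
    · exact ⟨(quad0Cyclic hn).trans (symBilCyclic hn).symm⟩
    · rcases Nat.even_or_odd n with he | ho
      · have h2 : 2 ∣ n := he.two_dvd
        exact ⟨(quadQuotCyclicEven h2).trans (zmodTwoQuot h2).symm⟩
      · haveI hq : Subsingleton (QuadGroup (ZMod n) ⧸ quadGroup0' (ZMod n)) :=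
          subsingleton_quotient_of _ (quad0_all_of_odd ho)
        haveI ht : Subsingleton (ZMod n ⧸ twoSub (ZMod n)) :=
          subsingleton_quotient_of _ (twoSub_all_of_odd ho)
        exact ⟨equivOfSubsingleton⟩
  · have h1 : n = 1 := by have := NeZero.ne n; omega
    subst h1
    exact P_subsingleton _

/-- Both statements are preserved by products. -/
lemma P_prod (M N : Type*) [AddCommGroup M] [AddCommGroup N]
    (hM : Nonempty (quadGroup0 M ≃+ symBil M) ∧
      Nonempty ((QuadGroup M ⧸ quadGroup0' M) ≃+ (M ⧸ twoSub M)))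
    (hN : Nonempty (quadGroup0 N ≃+ symBil N) ∧
      Nonempty ((QuadGroup N ⧸ quadGroup0' N) ≃+ (N ⧸ twoSub N))) :
    Nonempty (quadGroup0 (M × N) ≃+ symBil (M × N)) ∧
      Nonempty ((QuadGroup (M × N) ⧸ quadGroup0' (M × N)) ≃+ ((M × N) ⧸ twoSub (M × N))) := by
  obtain ⟨⟨e1⟩, ⟨f1⟩⟩ := hM
  obtain ⟨⟨e2⟩, ⟨f2⟩⟩ := hN
  constructor
  · exact ⟨quad0Prod.trans ((AddEquiv.prodCongr e1 (AddEquiv.prodCongr e2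
      (AddEquiv.refl _))).trans symBilProd.symm)⟩
  · exact ⟨quadQuotProd.trans ((AddEquiv.prodCongr f1 f2).trans twoQuotProd.symm)⟩

/-- Both statements transport along an isomorphism. -/
lemma P_congr {A A' : Type*} [AddCommGroup A] [AddCommGroup A'] (e : A ≃+ A')
    (h : Nonempty (quadGroup0 A' ≃+ symBil A') ∧
      Nonempty ((QuadGroup A' ⧸ quadGroup0' A') ≃+ (A' ⧸ twoSub A'))) :
    Nonempty (quadGroup0 A ≃+ symBil A) ∧
      Nonempty ((QuadGroup A ⧸ quadGroup0' A) ≃+ (A ⧸ twoSub A)) := by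
  obtain ⟨⟨e1⟩, ⟨f1⟩⟩ := h
  constructor
  · exact ⟨(quad0Congr e).trans (e1.trans (symBilCongr e).symm)⟩
  · exact ⟨(quadQuotCongr e).trans (f1.trans (twoQuotCongr e).symm)⟩

/-- Splitting off the first factor of a finite product. -/
noncomputable def piSuccEquiv {k : ℕ} (M : Fin (k + 1) → Type*) [∀ i, AddCommGroup (M i)] :
    (∀ i, M i) ≃+ (M 0 × ∀ i : Fin k, M i.succ) where
  toFun f := (f 0, fun i => f i.succ)
  invFun p := Fin.cons p.1 p.2
  left_inv f := Fin.cons_self_tail f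
  right_inv p := by
    refine Prod.ext ?_ ?_
    · show Fin.cons p.1 p.2 0 = p.1
      exact Fin.cons_zero _ _
    · funext i
      show Fin.cons p.1 p.2 i.succ = p.2 i
      exact Fin.cons_succ _ _ _
  map_add' f g := rfl

/-- Both statements for finite products of cyclic groups. -/
lemma P_pi : ∀ (k : ℕ) (d : Fin k → ℕ), (∀ i, NeZero (d i)) →
    (Nonempty (quadGroup0 (∀ i, ZMod (d i)) ≃+ symBil (∀ i, ZMod (d i))) ∧
      Nonempty ((QuadGroup (∀ i, ZMod (d i)) ⧸ quadGroup0' (∀ i, ZMod (d i))) ≃+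
        ((∀ i, ZMod (d i)) ⧸ twoSub (∀ i, ZMod (d i))))) := by
  intro k
  induction k with
  | zero =>
      intro d _
      haveI : Subsingleton (∀ i : Fin 0, ZMod (d i)) := ⟨fun f g => funext fun i => i.elim0⟩
      exact P_subsingleton _
  | succ k ih =>
      intro d hd
      haveI := hd 0
      have hM := P_cyclic (d 0)
      have hN := ih (fun i => d i.succ) (fun i => hd i.succ)
      exact P_congr (piSuccEquiv (fun i => ZMod (d i))) (P_prod _ _ hM hN)

end Assembly

end QuadAux

/-- For a finite abelian group `A` there is a short exact sequence
`0 → Hom(S²(A), ℝ/ℤ) → Quad(A, ℝ/ℤ) → A/2A → 0`: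
the kernel `Quad₀` is `Hom(S²(A), ℝ/ℤ)` and the quotient `Quad/Quad₀` is `A/2A`. -/
theorem quadGroup_exact_sequence (A : Type*) [AddCommGroup A] [Finite A] :
    Nonempty (quadGroup0 A ≃+ (symPower2 A →+ AddCircle (1 : ℝ))) ∧
    Nonempty ((QuadGroup A ⧸ quadGroup0' A) ≃+ (A ⧸ twoSub A)) := by
  classical
  obtain ⟨ι, fι, d, hd1, ⟨e⟩⟩ := AddCommGroup.equiv_directSum_zmod_of_finite' A
  haveI := fι
  let σ : ι ≃ Fin (Fintype.card ι) := Fintype.equivFin ι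
  let e2 : A ≃+ (∀ i : ι, ZMod (d i)) := e.trans (DirectSum.addEquivProd fun i => ZMod (d i))
  let e3 : (∀ i : ι, ZMod (d i)) ≃+ (∀ j : Fin (Fintype.card ι), ZMod (d (σ.symm j))) :=
    { Equiv.piCongrLeft' (fun i => ZMod (d i)) σ with map_add' := fun f g => rfl }
  have hP := QuadAux.P_pi (Fintype.card ι) (fun j => d (σ.symm j))
    (fun j => NeZero.of_pos (by have := hd1 (σ.symm j); show 0 < d (σ.symm j); omega))
  have h := QuadAux.P_congr (e2.trans e3) hP
  obtain ⟨⟨h1⟩, h2⟩ := h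
  exact ⟨⟨h1.trans QuadAux.homSymEquivBil.symm⟩, h2⟩
end
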